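/- arXiv:0902.2195 — 9 statements merged into one kernel-verified Lean document; each statement's English description precedes it below -/
import Mathlib

section
/- Suppose A, B ∈ SL₂(ℂ) satisfy tr A = tr B. Set y = tr(A²), r = tr(A⁻¹B), and for an integer k with m = ⌊k/2⌋ define W_k = (AB⁻¹)^m (A⁻¹B)^m if k is even and W_k = (AB⁻¹)^m AB (A⁻¹B)^m if k is odd. Then tr(W_k) = Φ_{-k}(r)·Ψ_k(r)·(y - r) + 2. -/
open Polynomial Matrix

/-- The trace of an element of `SL₂(ℂ)`. -/
noncomputable def trc (M : Matrix.SpecialLinearGroup (Fin 2) ℂ) : ℂ :=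
  Matrix.trace (M : Matrix (Fin 2) (Fin 2) ℂ)


lemma SL2_inv_coe (M : Matrix.SpecialLinearGroup (Fin 2) ℂ) :
    ((M⁻¹ : Matrix.SpecialLinearGroup (Fin 2) ℂ) : Matrix (Fin 2) (Fin 2) ℂ)
      = trc M • 1 - (M : Matrix (Fin 2) (Fin 2) ℂ) := by
  rw [Matrix.SpecialLinearGroup.coe_inv, Matrix.adjugate_fin_two]
  ext i j
  fin_cases i <;> fin_cases j <;>
    simp [trc, Matrix.trace_fin_two, Matrix.one_apply]

lemma SL2_CH (M : Matrix.SpecialLinearGroup (Fin 2) ℂ) :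
    (M : Matrix (Fin 2) (Fin 2) ℂ) * M = trc M • (M : Matrix (Fin 2) (Fin 2) ℂ) - 1 := by
  have h : (M : Matrix (Fin 2) (Fin 2) ℂ) * ((M⁻¹ : Matrix.SpecialLinearGroup (Fin 2) ℂ) : Matrix (Fin 2) (Fin 2) ℂ) = 1 := by
    rw [← Matrix.SpecialLinearGroup.coe_mul, mul_inv_cancel]
    simp
  rw [SL2_inv_coe, mul_sub, mul_smul_comm, mul_one] at h
  rw [eq_sub_iff_add_eq, ← h]
  abel

noncomputable def Fv (f : ℤ → Polynomial ℤ) (r : ℂ) (n : ℤ) : ℂ :=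
  (f n).eval₂ (Int.castRingHom ℂ) r

lemma Fv_zero (f : ℤ → Polynomial ℤ) (r : ℂ) (hf0 : f 0 = 0) : Fv f r 0 = 0 := by
  simp [Fv, hf0]

lemma Fv_one (f : ℤ → Polynomial ℤ) (r : ℂ) (hf1 : f 1 = 1) : Fv f r 1 = 1 := by
  simp [Fv, hf1]

lemma Fv_rec (f : ℤ → Polynomial ℤ) (r : ℂ)
    (hrec : ∀ j : ℤ, f (j + 1) = X * f j - f (j - 1)) (j : ℤ) :
    Fv f r (j + 1) = r * Fv f r j - Fv f r (j - 1) := by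
  unfold Fv
  rw [hrec j]
  simp [eval₂_sub, eval₂_mul, eval₂_X]

lemma Fv_negone (f : ℤ → Polynomial ℤ) (r : ℂ) (hf0 : f 0 = 0) (hf1 : f 1 = 1)
    (hrec : ∀ j : ℤ, f (j + 1) = X * f j - f (j - 1)) : Fv f r (-1) = -1 := by
  have h := Fv_rec f r hrec 0
  rw [show (0:ℤ) + 1 = 1 by ring, show (0:ℤ) - 1 = -1 by ring,
    Fv_zero f r hf0, Fv_one f r hf1] at h
  linear_combination h

lemma Fv_fib (f : ℤ → Polynomial ℤ) (r : ℂ) (hf0 : f 0 = 0) (hf1 : f 1 = 1)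
    (hrec : ∀ j : ℤ, f (j + 1) = X * f j - f (j - 1)) :
    ∀ n : ℤ, Fv f r n * Fv f r n + Fv f r (n-1) * Fv f r (n-1)
      - r * (Fv f r n * Fv f r (n-1)) = 1 := by
  intro n
  induction n using Int.induction_on with
  | zero =>
    rw [Fv_zero f r hf0, show (0:ℤ) - 1 = -1 by ring, Fv_negone f r hf0 hf1 hrec]
    ring
  | succ i ih =>
    rw [show ((i:ℤ) + 1) - 1 = (i:ℤ) by ring, Fv_rec f r hrec i]
    linear_combination ih
  | pred i ih =>
    have h2 : Fv f r (-(i:ℤ) - 1 - 1) = r * Fv f r (-(i:ℤ) - 1) - Fv f r (-(i:ℤ)) := by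
      have h := Fv_rec f r hrec (-(i:ℤ) - 1)
      rw [show (-(i:ℤ) - 1) + 1 = -(i:ℤ) by ring] at h
      linear_combination h
    rw [h2]
    linear_combination ih

lemma Fv_neg (f : ℤ → Polynomial ℤ) (r : ℂ) (hf0 : f 0 = 0) (hf1 : f 1 = 1)
    (hrec : ∀ j : ℤ, f (j + 1) = X * f j - f (j - 1)) :
    ∀ n : ℤ, Fv f r (-n) = -Fv f r n := by
  have key : ∀ n : ℤ, Fv f r (-n) = -Fv f r n ∧ Fv f r (-n + 1) = -Fv f r (n - 1) := by
    intro n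
    induction n using Int.induction_on with
    | zero =>
      constructor
      · rw [show -(0:ℤ) = 0 by ring, Fv_zero f r hf0]; ring
      · rw [show -(0:ℤ) + 1 = 1 by ring, show (0:ℤ) - 1 = -1 by ring,
          Fv_one f r hf1, Fv_negone f r hf0 hf1 hrec]; ring
    | succ i ih =>
      obtain ⟨h1, h2⟩ := ih
      have hup : Fv f r ((i:ℤ) + 1) = r * Fv f r i - Fv f r ((i:ℤ) - 1) :=
        Fv_rec f r hrec i
      have hdown : Fv f r (-(i:ℤ) + 1) = r * Fv f r (-(i:ℤ)) - Fv f r (-(i:ℤ) - 1) := by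
        have h := Fv_rec f r hrec (-(i:ℤ))
        exact h
      constructor
      · rw [show -((i:ℤ) + 1) = -(i:ℤ) - 1 by ring]
        linear_combination hdown - h2 + r * h1 + hup
      · rw [show -((i:ℤ) + 1) + 1 = -(i:ℤ) by ring, show ((i:ℤ) + 1) - 1 = (i:ℤ) by ring]
        exact h1
    | pred i ih =>
      obtain ⟨h1, h2⟩ := ih
      rw [neg_neg] at h1 h2
      have ha : Fv f r ((i:ℤ) + 2) = r * Fv f r ((i:ℤ) + 1) - Fv f r (i:ℤ) := by
        have h := Fv_rec f r hrec ((i:ℤ) + 1)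
        rw [show ((i:ℤ) + 1) + 1 = (i:ℤ) + 2 by ring,
          show ((i:ℤ) + 1) - 1 = (i:ℤ) by ring] at h
        exact h
      have hb : Fv f r (-(i:ℤ)) = r * Fv f r (-(i:ℤ) - 1) - Fv f r (-(i:ℤ) - 1 - 1) := by
        have h := Fv_rec f r hrec (-(i:ℤ) - 1)
        rw [show (-(i:ℤ) - 1) + 1 = -(i:ℤ) by ring] at h
        exact h
      constructor
      · rw [show -(-(i:ℤ) - 1) = (i:ℤ) + 1 by ring]
        exact h2
      · rw [show -(-(i:ℤ) - 1) + 1 = (i:ℤ) + 2 by ring]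
        linear_combination ha + r * h2 - h1 + hb
  intro n
  exact (key n).1

lemma SL2_zpow (f : ℤ → Polynomial ℤ) (r : ℂ) (hf0 : f 0 = 0) (hf1 : f 1 = 1)
    (hrec : ∀ j : ℤ, f (j + 1) = X * f j - f (j - 1))
    (M : Matrix.SpecialLinearGroup (Fin 2) ℂ) (hM : trc M = r) :
    ∀ n : ℤ, ((M ^ n : Matrix.SpecialLinearGroup (Fin 2) ℂ) : Matrix (Fin 2) (Fin 2) ℂ)
      = Fv f r n • (M : Matrix (Fin 2) (Fin 2) ℂ) - Fv f r (n - 1) • 1 := by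
  have hCH : (M : Matrix (Fin 2) (Fin 2) ℂ) * M = r • (M : Matrix (Fin 2) (Fin 2) ℂ) - 1 := by
    rw [SL2_CH, hM]
  have hInv : ((M⁻¹ : Matrix.SpecialLinearGroup (Fin 2) ℂ) : Matrix (Fin 2) (Fin 2) ℂ)
      = r • (1 : Matrix (Fin 2) (Fin 2) ℂ) - M := by rw [SL2_inv_coe, hM]
  intro n
  induction n using Int.induction_on with
  | zero =>
    rw [Fv_zero f r hf0, show (0:ℤ) - 1 = -1 by ring, Fv_negone f r hf0 hf1 hrec]
    simp
  | succ i ih =>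
    rw [_root_.zpow_add_one, Matrix.SpecialLinearGroup.coe_mul, ih,
      show ((i:ℤ) + 1) - 1 = (i:ℤ) by ring, Fv_rec f r hrec i]
    rw [sub_mul, smul_mul_assoc, smul_mul_assoc, one_mul, hCH]
    module
  | pred i ih =>
    rw [show -(i:ℤ) - 1 = (-(i:ℤ)) - 1 from rfl, _root_.zpow_sub_one,
      Matrix.SpecialLinearGroup.coe_mul, ih, hInv]
    have hidx : Fv f r (-(i:ℤ) - 1 - 1) = r * Fv f r (-(i:ℤ) - 1) - Fv f r (-(i:ℤ)) := by
      have h := Fv_rec f r hrec (-(i:ℤ) - 1)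
      rw [show (-(i:ℤ) - 1) + 1 = -(i:ℤ) by ring] at h
      linear_combination h
    rw [hidx]
    simp only [sub_mul, mul_sub, smul_mul_assoc, mul_smul_comm, smul_smul, one_mul, mul_one]
    rw [hCH]
    module

/-- for `A, B ∈ SL₂(ℂ)` with `tr A = tr B`, setting `y = tr A²`,
`r = tr(A⁻¹B)`, `m = ⌊k/2⌋`, and `W k = (AB⁻¹)^m (A⁻¹B)^m` (`k` even) or
`(AB⁻¹)^m AB (A⁻¹B)^m` (`k` odd), one has `tr (W k) = Φ (-k) (r) · Ψ k (r) · (y - r) + 2`,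
where `Φ (2j) = f j`, `Φ (2j-1) = g j = f j - f (j-1)`, `Ψ k = Φ (k+1) - Φ (k-1)`. -/
theorem stmt7 (f Φ : ℤ → Polynomial ℤ)
    (hf0 : f 0 = 0) (hf1 : f 1 = 1)
    (hrec : ∀ j : ℤ, f (j + 1) = X * f j - f (j - 1))
    (hΦeven : ∀ j : ℤ, Φ (2 * j) = f j)
    (hΦodd : ∀ j : ℤ, Φ (2 * j - 1) = f j - f (j - 1))
    (A B : Matrix.SpecialLinearGroup (Fin 2) ℂ) (htr : trc A = trc B)
    (k m : ℤ) (y r : ℂ)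
    (hy : y = trc (A ^ 2)) (hr : r = trc (A⁻¹ * B)) :
    (k = 2 * m →
      trc ((A * B⁻¹) ^ m * (A⁻¹ * B) ^ m)
        = (Φ (-k)).eval₂ (Int.castRingHom ℂ) r
            * (Φ (k + 1) - Φ (k - 1)).eval₂ (Int.castRingHom ℂ) r * (y - r) + 2) ∧
    (k = 2 * m + 1 →
      trc ((A * B⁻¹) ^ m * (A * B) * (A⁻¹ * B) ^ m)
        = (Φ (-k)).eval₂ (Int.castRingHom ℂ) r
            * (Φ (k + 1) - Φ (k - 1)).eval₂ (Int.castRingHom ℂ) r * (y - r) + 2) := by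
  obtain ⟨a, ha⟩ : ∃ a : Matrix (Fin 2) (Fin 2) ℂ, a = (A : Matrix (Fin 2) (Fin 2) ℂ) :=
    ⟨_, rfl⟩
  obtain ⟨b, hb⟩ : ∃ b : Matrix (Fin 2) (Fin 2) ℂ, b = (B : Matrix (Fin 2) (Fin 2) ℂ) :=
    ⟨_, rfl⟩
  obtain ⟨x, hx⟩ : ∃ x : ℂ, x = trc A := ⟨_, rfl⟩
  obtain ⟨z, hz⟩ : ∃ z : ℂ, z = trc (A * B) := ⟨_, rfl⟩
  have htra : Matrix.trace a = x := by rw [ha, hx]; rfl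
  have htrb : Matrix.trace b = x := by rw [hb, hx, htr]; rfl
  have hzab : Matrix.trace (a * b) = z := by
    rw [ha, hb, hz, show trc (A * B) = Matrix.trace
      ((A * B : Matrix.SpecialLinearGroup (Fin 2) ℂ) : Matrix (Fin 2) (Fin 2) ℂ) from rfl,
      Matrix.SpecialLinearGroup.coe_mul]
  have hzba : Matrix.trace (b * a) = z := by rw [Matrix.trace_mul_comm, hzab]
  have hCA : a * a = x • a - 1 := by rw [ha, hx]; exact SL2_CH A
  have hCB : b * b = x • b - 1 := by
    rw [hb, hx, htr]; exact SL2_CH B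
  have hCAB : (a * b) * (a * b) = z • (a * b) - 1 := by
    have h := SL2_CH (A * B)
    rw [Matrix.SpecialLinearGroup.coe_mul] at h
    rw [ha, hb, hz]; exact h
  have hIB : ((B⁻¹ : Matrix.SpecialLinearGroup (Fin 2) ℂ) : Matrix (Fin 2) (Fin 2) ℂ)
      = x • 1 - b := by rw [hb, hx, htr]; exact SL2_inv_coe B
  have hIA : ((A⁻¹ : Matrix.SpecialLinearGroup (Fin 2) ℂ) : Matrix (Fin 2) (Fin 2) ℂ)
      = x • 1 - a := by rw [ha, hx]; exact SL2_inv_coe A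
  have htr1 : Matrix.trace (1 : Matrix (Fin 2) (Fin 2) ℂ) = 2 := by
    simp [Matrix.trace_one]
  -- atomic word traces
  have w_aa : Matrix.trace (a * a) = x * x - 2 := by
    rw [hCA, Matrix.trace_sub, Matrix.trace_smul, htra, htr1, smul_eq_mul]
  have w_aab : Matrix.trace (a * (a * b)) = x * z - x := by
    rw [← mul_assoc, hCA, sub_mul, one_mul, smul_mul_assoc,
      Matrix.trace_sub, Matrix.trace_smul, hzab, smul_eq_mul, htrb]
  have w_aba : Matrix.trace (a * (b * a)) = x * z - x := by
    rw [Matrix.trace_mul_comm, mul_assoc, hCA, mul_sub, mul_one, mul_smul_comm,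
      Matrix.trace_sub, Matrix.trace_smul, hzba, smul_eq_mul, htrb]
  have w_abb : Matrix.trace (a * (b * b)) = x * z - x := by
    rw [hCB, mul_sub, mul_one, mul_smul_comm,
      Matrix.trace_sub, Matrix.trace_smul, hzab, smul_eq_mul, htra]
  have w_bab : Matrix.trace (b * (a * b)) = x * z - x := by
    rw [Matrix.trace_mul_comm, mul_assoc]; exact w_abb
  have w_abab : Matrix.trace (a * (b * (a * b))) = z * z - 2 := by
    rw [← mul_assoc, hCAB, Matrix.trace_sub, Matrix.trace_smul, hzab, smul_eq_mul, htr1]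
  have w_aabb : Matrix.trace (a * (a * (b * b))) = x * x * z - 2 * (x * x) + 2 := by
    rw [← mul_assoc, hCA, hCB]
    simp only [sub_mul, mul_sub, smul_mul_assoc, mul_smul_comm, smul_smul,
      one_mul, mul_one, Matrix.trace_sub, Matrix.trace_smul, smul_eq_mul, hzab, htra, htrb,
      htr1]
    ring
  have w_aabab : Matrix.trace (a * (a * (b * (a * b)))) = x * (z * z) - x * z - x := by
    rw [← mul_assoc, hCA, sub_mul, one_mul, smul_mul_assoc,
      Matrix.trace_sub, Matrix.trace_smul, w_abab, w_bab, smul_eq_mul]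
    ring
  have w_ababb : Matrix.trace (a * (b * (a * (b * b)))) = x * (z * z) - x * z - x := by
    rw [hCB]
    simp only [mul_sub, mul_one, mul_smul_comm, Matrix.trace_sub,
      Matrix.trace_smul, smul_eq_mul]
    rw [w_abab, w_aba]
    ring
  have w_ababab : Matrix.trace (a * (b * (a * (b * (a * b))))) = z * (z * z) - 3 * z := by
    have e : a * (b * (a * (b * (a * b)))) = (a * b) * ((a * b) * (a * b)) := by
      simp only [mul_assoc]
    rw [e, hCAB]
    simp only [mul_sub, mul_one, mul_smul_comm, Matrix.trace_sub,
      Matrix.trace_smul, smul_eq_mul, hzab]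
    rw [show (a * b) * (a * b) = a * (b * (a * b)) by simp only [mul_assoc], w_abab]
    ring
  -- coercions of the words
  have hd : ((A * B⁻¹ : Matrix.SpecialLinearGroup (Fin 2) ℂ) : Matrix (Fin 2) (Fin 2) ℂ)
      = a * (x • 1 - b) := by
    rw [Matrix.SpecialLinearGroup.coe_mul, hIB, ha]
  have hc : ((A⁻¹ * B : Matrix.SpecialLinearGroup (Fin 2) ℂ) : Matrix (Fin 2) (Fin 2) ℂ)
      = (x • 1 - a) * b := by
    rw [Matrix.SpecialLinearGroup.coe_mul, hIA, hb]
  have hab : ((A * B : Matrix.SpecialLinearGroup (Fin 2) ℂ) : Matrix (Fin 2) (Fin 2) ℂ)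
      = a * b := by
    rw [Matrix.SpecialLinearGroup.coe_mul, ha, hb]
  -- scalar values
  have hr' : r = x * x - z := by
    rw [hr, show trc (A⁻¹ * B) = Matrix.trace
      ((A⁻¹ * B : Matrix.SpecialLinearGroup (Fin 2) ℂ) : Matrix (Fin 2) (Fin 2) ℂ) from rfl,
      hc, sub_mul, smul_mul_assoc, one_mul, Matrix.trace_sub, Matrix.trace_smul,
      hzab, smul_eq_mul, htrb]
  have hy' : y = x * x - 2 := by
    rw [hy, show (A ^ 2 : Matrix.SpecialLinearGroup (Fin 2) ℂ) = A * A from sq A,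
      show trc (A * A) = Matrix.trace
      ((A * A : Matrix.SpecialLinearGroup (Fin 2) ℂ) : Matrix (Fin 2) (Fin 2) ℂ) from rfl,
      Matrix.SpecialLinearGroup.coe_mul, ← ha, w_aa]
  have htrD : trc (A * B⁻¹) = r := by
    rw [show trc (A * B⁻¹) = Matrix.trace
      ((A * B⁻¹ : Matrix.SpecialLinearGroup (Fin 2) ℂ) : Matrix (Fin 2) (Fin 2) ℂ) from rfl,
      hd, mul_sub, mul_smul_comm, mul_one, Matrix.trace_sub, Matrix.trace_smul,
      hzab, smul_eq_mul, htra, hr']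
  have htrC : trc (A⁻¹ * B) = r := hr.symm
  have hfibm := Fv_fib f r hf0 hf1 hrec m
  have hrecm := Fv_rec f r hrec m
  have hnegm := Fv_neg f r hf0 hf1 hrec m
  have hnegm1 : Fv f r (-m - 1) = -Fv f r (m + 1) := by
    rw [show -m - 1 = -(m + 1) by ring]
    exact Fv_neg f r hf0 hf1 hrec (m + 1)
  constructor
  · intro hk
    subst hk
    rw [show -(2 * m) = 2 * (-m) by ring, hΦeven,
      show 2 * m + 1 = 2 * (m + 1) - 1 by ring, hΦodd (m + 1), hΦodd m,
      show m + 1 - 1 = m by ring]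
    simp only [Polynomial.eval₂_sub]
    rw [show (f (-m)).eval₂ (Int.castRingHom ℂ) r = Fv f r (-m) from rfl,
      show (f (m + 1)).eval₂ (Int.castRingHom ℂ) r = Fv f r (m + 1) from rfl,
      show (f m).eval₂ (Int.castRingHom ℂ) r = Fv f r m from rfl,
      show (f (m - 1)).eval₂ (Int.castRingHom ℂ) r = Fv f r (m - 1) from rfl]
    rw [show trc ((A * B⁻¹) ^ m * (A⁻¹ * B) ^ m) = Matrix.trace
      (((A * B⁻¹) ^ m * (A⁻¹ * B) ^ m : Matrix.SpecialLinearGroup (Fin 2) ℂ)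
        : Matrix (Fin 2) (Fin 2) ℂ) from rfl,
      Matrix.SpecialLinearGroup.coe_mul,
      SL2_zpow f r hf0 hf1 hrec _ htrD m, SL2_zpow f r hf0 hf1 hrec _ htrC m, hd, hc]
    simp only [sub_mul, mul_sub, smul_mul_assoc, mul_smul_comm, smul_smul,
      one_mul, mul_one, mul_assoc, Matrix.trace_sub, Matrix.trace_smul, smul_eq_mul]
    rw [hnegm, hrecm]
    simp only [htra, htrb, hzab, w_aab, w_abb, w_abab, htr1]
    rw [hr', hy'] at *
    linear_combination 2 * hfibm
  · intro hk
    subst hk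
    rw [show -(2 * m + 1) = 2 * (-m) - 1 by ring, hΦodd (-m),
      show 2 * m + 1 + 1 = 2 * (m + 1) by ring, hΦeven (m + 1),
      show 2 * m + 1 - 1 = 2 * m by ring, hΦeven m]
    simp only [Polynomial.eval₂_sub]
    rw [show (f (-m)).eval₂ (Int.castRingHom ℂ) r = Fv f r (-m) from rfl,
      show (f (-m - 1)).eval₂ (Int.castRingHom ℂ) r = Fv f r (-m - 1) from rfl,
      show (f (m + 1)).eval₂ (Int.castRingHom ℂ) r = Fv f r (m + 1) from rfl,
      show (f m).eval₂ (Int.castRingHom ℂ) r = Fv f r m from rfl]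
    rw [show trc ((A * B⁻¹) ^ m * (A * B) * (A⁻¹ * B) ^ m) = Matrix.trace
      (((A * B⁻¹) ^ m * (A * B) * (A⁻¹ * B) ^ m : Matrix.SpecialLinearGroup (Fin 2) ℂ)
        : Matrix (Fin 2) (Fin 2) ℂ) from rfl,
      Matrix.SpecialLinearGroup.coe_mul, Matrix.SpecialLinearGroup.coe_mul,
      SL2_zpow f r hf0 hf1 hrec _ htrD m, SL2_zpow f r hf0 hf1 hrec _ htrC m, hd, hc, hab]
    simp only [sub_mul, mul_sub, smul_mul_assoc, mul_smul_comm, smul_smul,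
      one_mul, mul_one, mul_assoc, Matrix.trace_sub, Matrix.trace_smul, smul_eq_mul]
    rw [hnegm, hnegm1, hrecm]
    simp only [htra, htrb, hzab, w_aab, w_abb, w_abab, w_aabb, w_aabab, w_ababb,
      w_ababab, htr1]
    rw [hr', hy'] at *
    linear_combination 2 * hfibm
end

section
/- For every nonzero integer n, the polynomial f_n ∈ ℤ[u] is separable (has no repeated roots over an algebraic closure of ℚ). -/
open Polynomial

/-- for every nonzero integer `n`, the polynomial `f n` is separable
(over ℚ, equivalently it has no repeated roots in an algebraic closure of ℚ). -/
theorem stmt9 (f : ℤ → Polynomial ℤ)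
    (hf0 : f 0 = 0) (hf1 : f 1 = 1)
    (hrec : ∀ j : ℤ, f (j + 1) = X * f j - f (j - 1)) (n : ℤ) (hn : n ≠ 0) :
    ((f n).map (Int.castRingHom ℚ)).Separable := by
  have hrecn : ∀ j : ℤ, f (j+2) = X * f (j+1) - f j := by
    intro j
    have h := hrec (j+1)
    rw [show j+1+1 = j+2 by ring, show j+1-1 = j by ring] at h
    exact h
  have hD : ∀ j : ℤ, derivative (f (j+2)) = f (j+1) + X * derivative (f (j+1)) - derivative (f j) := by
    intro j
    rw [hrecn j, derivative_sub, derivative_mul, derivative_X, one_mul]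
  have hinv : ∀ j : ℤ, (f (j+1))^2 + (f j)^2 - X * f (j+1) * f j = 1 := by
    intro j
    induction j using Int.induction_on with
    | zero => norm_num [hf0, hf1]
    | succ k ih =>
        rw [show (k:ℤ)+1+1 = (k:ℤ)+2 by ring, hrecn k]
        linear_combination ih
    | pred k ih =>
        have hb := hrecn (-(k:ℤ)-1)
        rw [show -(k:ℤ)-1+2 = -(k:ℤ)+1 by ring, show -(k:ℤ)-1+1 = -(k:ℤ) by ring] at hb
        rw [show -(k:ℤ)-1+1 = -(k:ℤ) by ring]
        rw [hb] at ih
        linear_combination ih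
  have hQ : ∀ j : ℤ, ((X^2-4) * derivative (f j) = C j * (2 * f (j+1) - X * f j) - X * f j) ∧
      ((X^2-4) * derivative (f (j+1)) = C (j+1) * (2 * f (j+1+1) - X * f (j+1)) - X * f (j+1)) := by
    intro j
    induction j using Int.induction_on with
    | zero =>
        have h2 := hrecn 0
        norm_num [hf0, hf1] at h2
        constructor
        · norm_num [hf0, hf1]
        · norm_num [hf1, h2]
          ring
    | succ k ih =>
        refine ⟨ih.2, ?_⟩
        have e0 := ih.1
        have e1 := ih.2
        have hd := hD k
        have h3 := hrecn (k+1)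
        rw [show (k:ℤ)+1+2 = (k:ℤ)+3 by ring, show (k:ℤ)+1+1 = (k:ℤ)+2 by ring] at h3
        rw [show (k:ℤ)+1+1 = (k:ℤ)+2 by ring] at e1 ⊢
        rw [show (k:ℤ)+2+1 = (k:ℤ)+3 by ring]
        have hC1 : (C ((k:ℤ)+1) : Polynomial ℤ) = C (k:ℤ) + 1 := by rw [map_add, map_one]
        have hC2 : (C ((k:ℤ)+2) : Polynomial ℤ) = C (k:ℤ) + 2 := by
          rw [map_add]; norm_num
        rw [hC1] at e1
        rw [hC2, hd, h3, hrecn k]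
        rw [hrecn k] at e1
        linear_combination X * e1 - e0
    | pred k ih =>
        constructor
        · have e0 := ih.1
          have e1 := ih.2
          have hd := hD (-(k:ℤ)-1)
          rw [show -(k:ℤ)-1+2 = -(k:ℤ)+1 by ring, show -(k:ℤ)-1+1 = -(k:ℤ) by ring] at hd
          have hd' : derivative (f (-(k:ℤ)-1)) = f (-(k:ℤ)) + X * derivative (f (-(k:ℤ))) - derivative (f (-(k:ℤ)+1)) := by
            linear_combination hd
          have hb := hrecn (-(k:ℤ)-1)
          rw [show -(k:ℤ)-1+2 = -(k:ℤ)+1 by ring, show -(k:ℤ)-1+1 = -(k:ℤ) by ring] at hb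
          have hb' : f (-(k:ℤ)-1) = X * f (-(k:ℤ)) - f (-(k:ℤ)+1) := by linear_combination hb
          rw [show -(k:ℤ)-1+1 = -(k:ℤ) by ring]
          have hC1 : (C (-(k:ℤ)+1) : Polynomial ℤ) = C (-(k:ℤ)) + 1 := by rw [map_add, map_one]
          have hCm : (C (-(k:ℤ)-1) : Polynomial ℤ) = C (-(k:ℤ)) - 1 := by
            rw [map_sub, map_one]
          have hb2 := hrecn (-(k:ℤ))
          rw [show -(k:ℤ)+1+1 = -(k:ℤ)+2 by ring] at e1
          rw [hC1, hb2] at e1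
          rw [hCm, hd', hb']
          linear_combination X * e0 - e1
        · have := ih.1
          rw [show -(k:ℤ)-1+1 = -(k:ℤ) by ring]
          exact this
  -- key integer identities at n
  have H1 : (2 * f (n+1) - X * f n)^2 = (X^2-4) * (f n)^2 + 4 := by
    linear_combination 4 * hinv n
  have H2 := (hQ n).1
  -- map to ℚ
  set φ := Int.castRingHom ℚ
  have H1' := congrArg (Polynomial.map φ) H1
  have H2' := congrArg (Polynomial.map φ) H2
  simp only [Polynomial.map_add, Polynomial.map_mul, Polynomial.map_sub, Polynomial.map_pow,
    Polynomial.map_X, Polynomial.map_ofNat, Polynomial.map_C, Polynomial.map_intCast,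
    Polynomial.map_one, eq_intCast] at H1' H2'
  rw [← derivative_map] at H2'
  have hN : ((n : ℤ) : Polynomial ℚ) = C ((n:ℚ)) := by
    simp
  rw [hN] at H2'
  set F := (f n).map φ with hF
  set G := (f (n+1)).map φ with hG
  have hnq : (4 * (n:ℚ)^2) ≠ 0 := by positivity
  have hs : ((4*(n:ℚ)^2)⁻¹ * (n:ℚ)^2 * 4) = 1 := by
    field_simp
  have hc : (C ((4*(n:ℚ)^2)⁻¹) : Polynomial ℚ) * C ((n:ℚ))^2 * 4 = 1 := by
    rw [← map_pow, ← map_mul, show ((4:Polynomial ℚ)) = C (4:ℚ) from (map_ofNat C 4).symm,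
      ← map_mul, hs, map_one]
  rw [Polynomial.separable_def]
  refine ⟨C ((4*(n:ℚ)^2)⁻¹) * ((X^2 - C ((n:ℚ))^2 * (X^2-4)) * F),
    C ((4*(n:ℚ)^2)⁻¹) * ((X^2-4)^2 * derivative F + 2*X*(X^2-4)*F), ?_⟩
  linear_combination (C ((4*(n:ℚ)^2)⁻¹) * ((X^2-4)*derivative F + X*F + C ((n:ℚ)) * (2*G - X*F))) * H2'
    + (C ((4*(n:ℚ)^2)⁻¹) * C ((n:ℚ))^2) * H1' + hc
end

section
/- For every integer n, the identity (u + 2)·G_n = f_{2n} + 2n holds in ℤ[u], where G_n = g_{n+1}'·g_n - g_{n+1}·g_n'. -/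
open Polynomial

section Aux

variable (f : ℤ → Polynomial ℤ)

lemma aux_fneg1 (hf0 : f 0 = 0) (hf1 : f 1 = 1)
    (hrec : ∀ j : ℤ, f (j + 1) = X * f j - f (j - 1)) : f (-1) = -1 := by
  have h := hrec 0
  rw [show (0:ℤ) + 1 = 1 by ring, show (0:ℤ) - 1 = -1 by ring, hf0, hf1] at h
  linear_combination h

lemma aux_add (hf0 : f 0 = 0) (hf1 : f 1 = 1)
    (hrec : ∀ j : ℤ, f (j + 1) = X * f j - f (j - 1)) :
    ∀ b a : ℤ, f (a + b) = f (a + 1) * f b - f a * f (b - 1) := by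
  have hprev : ∀ j : ℤ, f (j - 1) = X * f j - f (j + 1) := fun j => by
    linear_combination hrec j
  intro b
  induction b using Int.induction_on with
  | zero =>
    intro a
    rw [show (0:ℤ) - 1 = -1 by ring, aux_fneg1 f hf0 hf1 hrec, hf0, add_zero]
    ring
  | succ k ih =>
    intro a
    have h1 := ih (a + 1)
    have h2 := hrec (a + 1)
    have h3 := hrec (k : ℤ)
    have e2 : (k:ℤ) + 1 - 1 = k := by ring
    have e1 : a + ((k:ℤ) + 1) = a + 1 + k := by ring
    have e3 : a + 1 - 1 = a := by ring
    rw [e2, e1, h1, h3, e3] at *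
    rw [h2]
    ring
  | pred k ih =>
    intro a
    have h1 := ih (a - 1)
    have e0 : a - 1 + 1 = a := by ring
    rw [e0] at h1
    have h2 := hprev a
    have h3 := hprev (-(k:ℤ) - 1)
    have e2 : -(k:ℤ) - 1 + 1 = -(k:ℤ) := by ring
    rw [e2] at h3
    have e1 : a + (-(k:ℤ) - 1) = a - 1 + -(k:ℤ) := by ring
    rw [e1, h1, h2, h3]
    ring

lemma aux_cassini (hf0 : f 0 = 0) (hf1 : f 1 = 1)
    (hrec : ∀ j : ℤ, f (j + 1) = X * f j - f (j - 1)) :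
    ∀ m : ℤ, f m ^ 2 - f (m + 1) * f (m - 1) = 1 := by
  have hprev : ∀ j : ℤ, f (j - 1) = X * f j - f (j + 1) := fun j => by
    linear_combination hrec j
  intro m
  induction m using Int.induction_on with
  | zero =>
    rw [hf0, show (0:ℤ) + 1 = 1 by ring, hf1, show (0:ℤ) - 1 = -1 by ring,
      aux_fneg1 f hf0 hf1 hrec]
    ring
  | succ k ih =>
    have h := hrec ((k:ℤ) + 1)
    have e : (k:ℤ) + 1 - 1 = k := by ring
    rw [e] at h
    have h' := hrec (k:ℤ)
    rw [show (k:ℤ) + 1 - 1 = k by ring, h]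
    linear_combination ih + f ((k:ℤ) + 1) * h'
  | pred k ih =>
    have h := hprev (-(k:ℤ) - 1)
    have e : -(k:ℤ) - 1 + 1 = -(k:ℤ) := by ring
    rw [e] at h
    have h' := hprev (-(k:ℤ))
    rw [e, h]
    linear_combination ih + f (-(k:ℤ) - 1) * h'

lemma aux_sq (hf0 : f 0 = 0) (hf1 : f 1 = 1)
    (hrec : ∀ j : ℤ, f (j + 1) = X * f j - f (j - 1)) :
    ∀ m : ℤ, (X + 2) * (f m - f (m - 1)) ^ 2 = f (2 * m) - f (2 * m - 2) + 2 := by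
  intro m
  have h1 := hrec m
  have h2 := hrec (m - 1)
  rw [show m - 1 + 1 = m by ring] at h2
  have h3 := aux_cassini f hf0 hf1 hrec m
  have h4 := aux_add f hf0 hf1 hrec m m
  have h5 := aux_add f hf0 hf1 hrec (m - 1) (m - 1)
  rw [show m - 1 + 1 = m by ring] at h5
  rw [show 2 * m = m + m by ring, show m + m - 2 = m - 1 + (m - 1) by ring, h4, h5]
  linear_combination (-f m + 2 * f (m - 1)) * h1 + (-f (m - 1)) * h2 + 2 * h3

end Aux

/-- `(u + 2) · G n = f (2n) + 2n` in `ℤ[u]`, where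
`G n = g (n+1)' · g n - g (n+1) · g n'`. -/
theorem stmt11 (f : ℤ → Polynomial ℤ)
    (hf0 : f 0 = 0) (hf1 : f 1 = 1)
    (hrec : ∀ j : ℤ, f (j + 1) = X * f j - f (j - 1))
    (g : ℤ → Polynomial ℤ) (hg : ∀ j : ℤ, g j = f j - f (j - 1)) (n : ℤ) :
    (X + 2) * (derivative (g (n + 1)) * g n - g (n + 1) * derivative (g n))
      = f (2 * n) + C (2 * n) := by
  have grec : ∀ j : ℤ, g (j + 1) = X * g j - g (j - 1) := by
    intro j
    rw [hg, hg, hg, show j + 1 - 1 = j by ring, show j - 1 - 1 = j - 1 - 1 from rfl]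
    have h1 := hrec j
    have h2 := hrec (j - 1)
    rw [show j - 1 + 1 = j by ring] at h2
    linear_combination h1 - h2
  induction n using Int.induction_on with
  | zero =>
    have e1 : g 1 = 1 := by
      rw [hg, show (1:ℤ) - 1 = 0 by ring, hf0, hf1]; ring
    have e0 : g 0 = 1 := by
      rw [hg, show (0:ℤ) - 1 = -1 by ring, hf0, aux_fneg1 f hf0 hf1 hrec]; ring
    rw [show (0:ℤ) + 1 = 1 by ring, e1, e0, show (2 : ℤ) * 0 = 0 by ring, hf0]
    simp
  | succ k ih =>
    have hgr := grec ((k:ℤ) + 1)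
    rw [show (k:ℤ) + 1 - 1 = k by ring] at hgr
    have hd : derivative (g ((k:ℤ) + 1 + 1))
        = g ((k:ℤ) + 1) + X * derivative (g ((k:ℤ) + 1)) - derivative (g (k:ℤ)) := by
      rw [hgr, derivative_sub, derivative_mul, derivative_X]; ring
    have hsq := aux_sq f hf0 hf1 hrec ((k:ℤ) + 1)
    rw [show (k:ℤ) + 1 - 1 = k by ring, show 2 * ((k:ℤ) + 1) = 2 * k + 2 by ring,
      show 2 * (k:ℤ) + 2 - 2 = 2 * k by ring] at hsq
    have hgk : f ((k:ℤ) + 1) - f (k:ℤ) = g ((k:ℤ) + 1) := by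
      rw [hg, show (k:ℤ) + 1 - 1 = k by ring]
    rw [hgk] at hsq
    rw [hd, hgr, show 2 * ((k:ℤ) + 1) = 2 * k + 2 by ring]
    have hC : (C (2 * (k:ℤ) + 2) : Polynomial ℤ) = C (2 * (k:ℤ)) + 2 := by
      rw [map_add]; norm_num
    rw [hC]
    linear_combination ih + hsq
  | pred k ih =>
    have hgr := grec (-(k:ℤ))
    have hd : derivative (g (-(k:ℤ) + 1))
        = g (-(k:ℤ)) + X * derivative (g (-(k:ℤ))) - derivative (g (-(k:ℤ) - 1)) := by
      rw [hgr, derivative_sub, derivative_mul, derivative_X]; ring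
    rw [hd, hgr] at ih
    have hsq := aux_sq f hf0 hf1 hrec (-(k:ℤ))
    rw [← hg (-(k:ℤ))] at hsq
    rw [show -(k:ℤ) - 1 + 1 = -(k:ℤ) by ring,
      show 2 * (-(k:ℤ) - 1) = 2 * -(k:ℤ) - 2 by ring]
    have hC : (C (2 * -(k:ℤ) - 2) : Polynomial ℤ) = C (2 * -(k:ℤ)) - 2 := by
      rw [map_sub]; norm_num
    rw [hC]
    linear_combination ih - hsq
end

section
/- For every integer n, G_n(2) = n and G_n(-2) = n(4n² - 1)/3, where G_n = g_{n+1}'·g_n - g_{n+1}·g_n'. -/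
open Polynomial

/-- `G n (2) = n` and `G n (-2) = n (4n² - 1)/3`, where
`G n = g (n+1)' · g n - g (n+1) · g n'`. -/
theorem stmt12 (f : ℤ → Polynomial ℤ)
    (hf0 : f 0 = 0) (hf1 : f 1 = 1)
    (hrec : ∀ j : ℤ, f (j + 1) = X * f j - f (j - 1))
    (g : ℤ → Polynomial ℤ) (hg : ∀ j : ℤ, g j = f j - f (j - 1))
    (G : ℤ → Polynomial ℤ)
    (hG : ∀ n : ℤ, G n = derivative (g (n + 1)) * g n - g (n + 1) * derivative (g n))
    (n : ℤ) :
    (G n).eval 2 = n ∧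
    ((((G n).eval (-2) : ℤ) : ℚ) = (n : ℚ) * (4 * (n : ℚ) ^ 2 - 1) / 3) := by
  -- f (-1) = -1
  have hfm1 : f (-1) = -1 := by
    have h := hrec 0
    rw [show (0:ℤ)+1 = 1 by norm_num, show (0:ℤ)-1 = -1 by norm_num, hf0, hf1] at h
    linear_combination h
  -- g satisfies the same recurrence
  have hgrec : ∀ j : ℤ, g (j+1) = X * g j - g (j-1) := by
    intro j
    have h1 := hrec j
    have h2 := hrec (j-1)
    rw [show j-1+1 = j by ring, show j-1-1 = j-2 by ring] at h2
    rw [hg (j+1), hg j, hg (j-1), show j+1-1 = j by ring,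
      show j-1-1 = j-2 by ring]
    linear_combination h1 - h2
  -- G n = G (n-1) + (g n)^2
  have hGrec : ∀ m : ℤ, G m = G (m-1) + (g m)^2 := by
    intro m
    have h1 := hgrec m
    rw [hG m, hG (m-1), show m-1+1 = m by ring, h1]
    rw [derivative_sub, derivative_mul, derivative_X]
    ring
  have hg0 : g 0 = 1 := by
    rw [hg 0, show (0:ℤ)-1 = -1 by norm_num, hf0, hfm1]; ring
  have hg1 : g 1 = 1 := by
    rw [hg 1, show (1:ℤ)-1 = 0 by norm_num, hf0, hf1]; ring
  -- values at 2
  have key2 : ∀ m : ℤ, (g m).eval 2 = 1 ∧ (g (m+1)).eval 2 = 1 := by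
    intro m
    induction m using Int.induction_on with
    | zero =>
      rw [show (0:ℤ)+1 = 1 by norm_num, hg0, hg1]
      norm_num
    | succ k ih =>
      obtain ⟨ih1, ih2⟩ := ih
      refine ⟨ih2, ?_⟩
      have h := hgrec ((k:ℤ)+1)
      rw [show (k:ℤ)+1-1 = k by ring] at h
      rw [h]
      simp only [eval_sub, eval_mul, eval_X, ih1, ih2]
      ring
    | pred k ih =>
      obtain ⟨ih1, ih2⟩ := ih
      have h := hgrec (-(k:ℤ))
      rw [show -(k:ℤ)-1 = -k-1 by ring] at h
      have hval : (g (-(k:ℤ)-1)).eval 2 = 1 := by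
        have := congrArg (fun p => Polynomial.eval 2 p) h
        simp only [eval_sub, eval_mul, eval_X, ih1, ih2] at this
        linarith
      exact ⟨hval, by rw [show -(k:ℤ)-1+1 = -k by ring]; exact ih1⟩
  -- values squared at -2
  have keym2 : ∀ m : ℤ, (g m).eval (-2) ^ 2 = (2*m-1)^2 ∧
      (g m).eval (-2) * (g (m+1)).eval (-2) = -((2*m-1)*(2*m+1)) ∧
      (g (m+1)).eval (-2) ^ 2 = (2*m+1)^2 := by
    intro m
    induction m using Int.induction_on with
    | zero =>
      rw [show (0:ℤ)+1 = 1 by norm_num, hg0, hg1]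
      norm_num
    | succ k ih =>
      obtain ⟨ih1, ih2, ih3⟩ := ih
      have h := hgrec ((k:ℤ)+1)
      rw [show (k:ℤ)+1-1 = k by ring] at h
      have hv : (g ((k:ℤ)+1+1)).eval (-2)
          = -2 * (g ((k:ℤ)+1)).eval (-2) - (g (k:ℤ)).eval (-2) := by
        rw [h]; simp only [eval_sub, eval_mul, eval_X]
      refine ⟨?_, ?_, ?_⟩
      · linear_combination ih3
      · rw [hv]
        linear_combination (-2 : ℤ) * ih3 - ih2
      · rw [hv]
        linear_combination (4 : ℤ) * ih3 + 4 * ih2 + ih1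
    | pred k ih =>
      obtain ⟨ih1, ih2, ih3⟩ := ih
      have h := hgrec (-(k:ℤ))
      have hv : (g (-(k:ℤ)-1)).eval (-2)
          = -2 * (g (-(k:ℤ))).eval (-2) - (g (-(k:ℤ)+1)).eval (-2) := by
        have := congrArg (fun p => Polynomial.eval (-2) p) h
        simp only [eval_sub, eval_mul, eval_X] at this
        linarith
      rw [show -(k:ℤ)-1+1 = -k by ring]
      refine ⟨?_, ?_, ?_⟩
      · rw [hv]
        linear_combination (4 : ℤ) * ih1 + 4 * ih2 + ih3
      · rw [hv]
        linear_combination (-2 : ℤ) * ih1 - ih2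
      · linear_combination ih1
  -- base value G 0 = 0
  have hG0 : G 0 = 0 := by
    rw [hG 0, show (0:ℤ)+1 = 1 by norm_num, hg0, hg1]
    simp
  -- main induction for G
  have main : ∀ m : ℤ, (G m).eval 2 = m ∧ 3 * (G m).eval (-2) = m * (4*m^2 - 1) := by
    intro m
    induction m using Int.induction_on with
    | zero => rw [hG0]; norm_num
    | succ k ih =>
      obtain ⟨ih1, ih2⟩ := ih
      have h := hGrec ((k:ℤ)+1)
      rw [show (k:ℤ)+1-1 = k by ring] at h
      have h2 := (key2 ((k:ℤ)+1)).1
      have hm2 := (keym2 ((k:ℤ)+1)).1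
      constructor
      · rw [h]; simp only [eval_add, eval_pow, h2, ih1]; ring
      · rw [h]
        simp only [eval_add, eval_pow]
        rw [hm2]
        linear_combination ih2
    | pred k ih =>
      obtain ⟨ih1, ih2⟩ := ih
      have h := hGrec (-(k:ℤ))
      have h2 := (key2 (-(k:ℤ))).1
      have hm2 := (keym2 (-(k:ℤ))).1
      have hv2 : (G (-(k:ℤ)-1)).eval 2 = (G (-(k:ℤ))).eval 2 - 1 := by
        have := congrArg (fun p => Polynomial.eval 2 p) h
        simp only [eval_add, eval_pow, h2] at this
        linarith
      have hvm2 : (G (-(k:ℤ)-1)).eval (-2)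
          = (G (-(k:ℤ))).eval (-2) - (g (-(k:ℤ))).eval (-2) ^ 2 := by
        have := congrArg (fun p => Polynomial.eval (-2) p) h
        simp only [eval_add, eval_pow] at this
        linarith
      constructor
      · rw [hv2, ih1]
      · rw [hvm2]
        linear_combination ih2 - 3 * hm2
  obtain ⟨h2, hm2⟩ := main n
  refine ⟨h2, ?_⟩
  rw [eq_div_iff (by norm_num : (3:ℚ) ≠ 0)]
  have : ((G n).eval (-2) : ℤ) * 3 = n * (4 * n^2 - 1) := by linarith
  exact_mod_cast this
end

section
/- Let n be an integer and F a field whose characteristic does not divide 2n - 1. Then the image of g_n in F[u] is separable, and the ideal generated by the images of G_n and g_n in F[u] is the unit ideal. -/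
open Polynomial

private lemma stmt13_pairInd (P : ℤ → Prop) (h0 : P 0) (h1 : P 1)
    (hup : ∀ m : ℤ, P m → P (m + 1) → P (m + 2))
    (hdn : ∀ m : ℤ, P m → P (m + 1) → P (m - 1)) : ∀ n : ℤ, P n := by
  have key : ∀ k : ℤ, P k ∧ P (k + 1) := by
    intro k
    induction k using Int.induction_on with
    | zero => exact ⟨h0, by simpa using h1⟩
    | succ i ih =>
        refine ⟨ih.2, ?_⟩
        have h := hup i ih.1 ih.2
        have e : (i : ℤ) + 2 = (i + 1) + 1 := by ring
        rwa [e] at h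
    | pred i ih =>
        refine ⟨hdn (-i) ih.1 ih.2, ?_⟩
        have e : -(i:ℤ) - 1 + 1 = -(i : ℤ) := by ring
        rw [e]; exact ih.1
  exact fun n => (key n).1

section
variable (g : ℤ → Polynomial ℤ)
variable (hg0 : g 0 = 1) (hg1 : g 1 = 1)
variable (hgrec : ∀ j : ℤ, g (j + 1) = X * g j - g (j - 1))

include hgrec in
private lemma stmt13_hg2 : ∀ j : ℤ, g (j + 2) = X * g (j + 1) - g j := by
  intro j
  have h := hgrec (j + 1)
  rwa [show (j : ℤ) + 1 + 1 = j + 2 by ring, show (j : ℤ) + 1 - 1 = j by ring] at h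

include hgrec in
private lemma stmt13_hgm : ∀ j : ℤ, g (j - 1) = X * g j - g (j + 1) := by
  intro j
  have h := hgrec j
  linear_combination h

include hg0 hg1 hgrec in
private lemma stmt13_ev2 : ∀ m : ℤ, (g m).eval 2 = 1 := by
  refine stmt13_pairInd _ (by simp [hg0]) (by simp [hg1]) ?_ ?_
  · intro m hm hm1
    rw [stmt13_hg2 g hgrec m]
    simp [hm, hm1]
  · intro m hm hm1
    rw [stmt13_hgm g hgrec m]
    simp [hm, hm1]

include hg0 hg1 hgrec in
private lemma stmt13_W : ∀ m : ℤ, g (m + 1) * g (m - 1) = g m ^ 2 + (X - 2) := by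
  refine stmt13_pairInd _ ?_ ?_ ?_ ?_
  · rw [show (0:ℤ) + 1 = 1 by ring, show (0:ℤ) - 1 = 0 - 1 by ring,
      stmt13_hgm g hgrec 0, show (0:ℤ) + 1 = 1 by ring, hg0, hg1]
    ring
  · rw [show (1:ℤ) + 1 = 0 + 2 by ring, stmt13_hg2 g hgrec 0,
      show (0:ℤ) + 1 = 1 by ring, show (1:ℤ) - 1 = 0 by ring, hg0, hg1]
    ring
  · intro m hm hm1
    rw [show (m:ℤ) + 2 + 1 = m + 1 + 2 by ring, stmt13_hg2 g hgrec (m+1),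
      show (m:ℤ) + 1 + 1 = m + 2 by ring, show (m:ℤ) + 2 - 1 = m + 1 by ring] at *
    rw [stmt13_hg2 g hgrec m] at *
    rw [show (m:ℤ) + 1 - 1 = m by ring] at hm1
    linear_combination hm1
  · intro m hm hm1
    rw [show (m:ℤ) - 1 + 1 = m by ring, show (m:ℤ) - 1 - 1 = m - 1 - 1 by ring,
      stmt13_hgm g hgrec (m - 1), show (m:ℤ) - 1 + 1 = m by ring,
      stmt13_hgm g hgrec m]
    rw [stmt13_hgm g hgrec m] at hm
    linear_combination hm

include hg0 hg1 hgrec in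
private lemma stmt13_C : ∀ m : ℤ, (X ^ 2 - 4) * derivative (g m)
    = (2 * (m : Polynomial ℤ) - 1) * g (m + 1) - ((m : Polynomial ℤ) * X - 1) * g m := by
  refine stmt13_pairInd _ ?_ ?_ ?_ ?_
  · rw [hg0, show (0:ℤ) + 1 = 1 by ring, hg1]
    push_cast
    simp
  · rw [hg1, show (1:ℤ) + 1 = 0 + 2 by ring, stmt13_hg2 g hgrec 0,
      show (0:ℤ) + 1 = 1 by ring, hg0, hg1]
    push_cast
    simp
    ring
  · intro m hm hm1
    rw [show (m:ℤ) + 2 + 1 = m + 1 + 2 by ring, stmt13_hg2 g hgrec (m+1),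
      show (m:ℤ) + 1 + 1 = m + 2 by ring, stmt13_hg2 g hgrec m,
      derivative_sub, derivative_mul, derivative_X]
    rw [show (m:ℤ) + 1 + 1 = m + 2 by ring, stmt13_hg2 g hgrec m] at hm1
    push_cast at hm hm1 ⊢
    ring_nf at hm hm1 ⊢
    linear_combination X * hm1 - hm
  · intro m hm hm1
    rw [show (m:ℤ) - 1 + 1 = m by ring, stmt13_hgm g hgrec m,
      derivative_sub, derivative_mul, derivative_X]
    rw [show (m:ℤ) + 1 + 1 = m + 2 by ring, stmt13_hg2 g hgrec m] at hm1
    push_cast at hm hm1 ⊢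
    ring_nf at hm hm1 ⊢
    linear_combination X * hm - hm1
end

/-- if `F` is a field whose characteristic does not divide `2n - 1`,
then the image of `g n` in `F[u]` is separable, and the images of `G n` and `g n`
generate the unit ideal of `F[u]`. -/
theorem stmt13 (f : ℤ → Polynomial ℤ)
    (hf0 : f 0 = 0) (hf1 : f 1 = 1)
    (hrec : ∀ j : ℤ, f (j + 1) = X * f j - f (j - 1))
    (g : ℤ → Polynomial ℤ) (hg : ∀ j : ℤ, g j = f j - f (j - 1))
    (G : ℤ → Polynomial ℤ)
    (hG : ∀ n : ℤ, G n = derivative (g (n + 1)) * g n - g (n + 1) * derivative (g n))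
    (n : ℤ) (F : Type*) [Field F] (hchar : ¬ ((ringChar F : ℤ) ∣ (2 * n - 1))) :
    ((g n).map (Int.castRingHom F)).Separable ∧
    Ideal.span ({(G n).map (Int.castRingHom F), (g n).map (Int.castRingHom F)} :
        Set (Polynomial F)) = ⊤ := by
  -- basic facts about g
  have hg0 : g 0 = 1 := by
    have h := hrec 0
    rw [show (0:ℤ) + 1 = 1 by ring, hf0, hf1] at h
    have h2 := hg 0
    rw [hf0] at h2
    linear_combination h2 - h
  have hg1 : g 1 = 1 := by
    have h := hg 1
    rw [show (1:ℤ) - 1 = 0 by ring, hf1, hf0] at h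
    simpa using h
  have hgrec : ∀ j : ℤ, g (j + 1) = X * g j - g (j - 1) := by
    intro j
    have e1 := hg (j + 1)
    rw [show (j:ℤ) + 1 - 1 = j by ring] at e1
    have e2 := hg j
    have e3 := hg (j - 1)
    have e4 := hrec j
    have e5 := hrec (j - 1)
    rw [show (j:ℤ) - 1 + 1 = j by ring] at e5
    linear_combination e1 - X * e2 + e3 + e4 - e5
  have hev2 := stmt13_ev2 g hg0 hg1 hgrec
  have hW := stmt13_W g hg0 hg1 hgrec
  have hC := stmt13_C g hg0 hg1 hgrec
  -- extract q1 over ℤ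
  have hdvd : (X - C (2:ℤ)) ∣ (g n - C ((g n).eval 2)) := X_sub_C_dvd_sub_C_eval
  rw [hev2 n, map_one] at hdvd
  obtain ⟨q1, hq1⟩ := hdvd
  -- mapped quantities
  set φ := Int.castRingHom F with hφ
  set aF := (g (n - 1)).map φ with haF
  set bF := (g n).map φ with hbF
  set eF := (g (n + 1)).map φ with heF
  set e2F := (g (n + 1 + 1)).map φ with he2F
  set q1F := q1.map φ with hq1F'
  -- mapped identities
  have hq1F : bF - 1 = (X - 2) * q1F := by
    have h := congrArg (Polynomial.map φ) hq1
    simpa [Polynomial.map_sub, Polynomial.map_mul, Polynomial.map_ofNat] using h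
  have hWF : eF * aF = bF ^ 2 + (X - 2) := by
    have h := congrArg (Polynomial.map φ) (hW n)
    simpa [Polynomial.map_mul, Polynomial.map_add, Polynomial.map_sub, Polynomial.map_pow,
      Polynomial.map_ofNat] using h
  have hrecF : e2F = X * eF - bF := by
    have h := hgrec (n + 1)
    rw [show (n:ℤ) + 1 - 1 = n by ring] at h
    have h2 := congrArg (Polynomial.map φ) h
    simpa [Polynomial.map_sub, Polynomial.map_mul] using h2
  have hCnF : (X ^ 2 - 4) * derivative bF = ((2 * ((n:ℤ) : Polynomial F) - 1)) * eF - (((n:ℤ) : Polynomial F) * X - 1) * bF := by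
    have h := congrArg (Polynomial.map φ) (hC n)
    simp only [Polynomial.map_mul, Polynomial.map_sub, Polynomial.map_add, Polynomial.map_pow,
      Polynomial.map_one, Polynomial.map_X, Polynomial.map_ofNat, Polynomial.map_intCast,
      ← Polynomial.derivative_map] at h
    exact h
  have hCn1F : (X ^ 2 - 4) * derivative eF = ((2 * ((n:ℤ) : Polynomial F) + 1)) * e2F - ((((n:ℤ) : Polynomial F) + 1) * X - 1) * eF := by
    have h := congrArg (Polynomial.map φ) (hC (n + 1))
    simp only [Polynomial.map_mul, Polynomial.map_sub, Polynomial.map_add, Polynomial.map_pow,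
      Polynomial.map_one, Polynomial.map_X, Polynomial.map_ofNat, Polynomial.map_intCast,
      ← Polynomial.derivative_map] at h
    push_cast at h
    linear_combination h
  -- nonvanishing of 2n-1 in F
  have hd : ((2 * n - 1 : ℤ) : F) ≠ 0 := by
    intro h
    exact hchar ((CharP.intCast_eq_zero_iff F (ringChar F) _).mp h)
  set Dinv : Polynomial F := C (((2 * n - 1 : ℤ) : F)⁻¹) with hDinv
  have hDD : Dinv * (2 * ((n:ℤ) : Polynomial F) - 1) = 1 := by
    have h1 : Dinv * ((2 * n - 1 : ℤ) : Polynomial F) = 1 := by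
      rw [← Polynomial.C_eq_intCast, hDinv, ← C_mul, inv_mul_cancel₀ hd, C_1]
    push_cast at h1
    linear_combination h1
  constructor
  · -- separability
    refine ⟨Dinv * (((2*((n:ℤ) : Polynomial F)-1)) * q1F * bF + ((2*((n:ℤ) : Polynomial F)-1)) - q1F * aF * (((n:ℤ) : Polynomial F) * X - 1)),
        -(Dinv * (q1F * aF * (X ^ 2 - 4))), ?_⟩
    linear_combination (-(Dinv * q1F * aF)) * hCnF + (-(Dinv * ((2*((n:ℤ) : Polynomial F)-1)) * q1F)) * hWF
      + (Dinv * ((2*((n:ℤ) : Polynomial F)-1))) * hq1F + hDD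
  · rw [Ideal.eq_top_iff_one, Ideal.mem_span_pair]
    have hGm : (G n).map φ = derivative eF * bF - eF * derivative bF := by
      rw [hG n]
      simp only [Polynomial.map_sub, Polynomial.map_mul, ← Polynomial.derivative_map]
      rfl
    refine ⟨-(Dinv * (q1F ^ 2 * aF ^ 2 * (X ^ 2 - 4))),
        Dinv * (q1F^2*aF^2*(((2*((n:ℤ) : Polynomial F)))*X*eF - ((2*((n:ℤ) : Polynomial F)+1))*bF) - ((2*((n:ℤ) : Polynomial F)-1))*q1F^2*bF*(bF^2+2*(X-2))
          - ((2*((n:ℤ) : Polynomial F)-1))*bF + 2*((2*((n:ℤ) : Polynomial F)-1))), ?_⟩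
    rw [hGm]
    linear_combination (-(Dinv*q1F^2*aF^2*bF)) * hCn1F + (Dinv*q1F^2*aF^2*eF) * hCnF
      + (-(Dinv*((2*((n:ℤ) : Polynomial F)+1))*q1F^2*aF^2*bF)) * hrecF
      + (Dinv*((2*((n:ℤ) : Polynomial F)-1))*q1F^2*(aF*eF + bF^2 + (X-2))) * hWF
      + (-(Dinv*((2*((n:ℤ) : Polynomial F)-1)))*(bF - 1 + (X-2)*q1F)) * hq1F + hDD
end

section
/- For every integer n, the following identities hold in ℤ[u]: (i) 2 - u = g_{n+1}² + g_n² - u·g_n·g_{n+1}; (ii) (4 - u²)·G_n = (2n+1)·g_n² + (2n-1)·g_{n+1}² - 2n·u·g_n·g_{n+1}; (iii) (4 - u²)·G_n = g_n² - g_{n+1}² - 2n·(u - 2); (iv) (u² - 4)·F_n = f_{n+1}² - f_n² - (2n + 1). -/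
open Polynomial

/-- the four identities of Lemma `lemmirrednewids` in `ℤ[u]`. -/
theorem stmt14 (f : ℤ → Polynomial ℤ)
    (hf0 : f 0 = 0) (hf1 : f 1 = 1)
    (hrec : ∀ j : ℤ, f (j + 1) = X * f j - f (j - 1))
    (g : ℤ → Polynomial ℤ) (hg : ∀ j : ℤ, g j = f j - f (j - 1))
    (F G : ℤ → Polynomial ℤ)
    (hF : ∀ n : ℤ, F n = derivative (f (n + 1)) * f n - f (n + 1) * derivative (f n))
    (hG : ∀ n : ℤ, G n = derivative (g (n + 1)) * g n - g (n + 1) * derivative (g n))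
    (n : ℤ) :
    (2 - X : Polynomial ℤ) = g (n + 1) ^ 2 + g n ^ 2 - X * g n * g (n + 1) ∧
    (4 - X ^ 2) * G n
      = C (2 * n + 1) * g n ^ 2 + C (2 * n - 1) * g (n + 1) ^ 2
        - C (2 * n) * X * g n * g (n + 1) ∧
    (4 - X ^ 2) * G n = g n ^ 2 - g (n + 1) ^ 2 - C (2 * n) * (X - 2) ∧
    (X ^ 2 - 4) * F n = f (n + 1) ^ 2 - f n ^ 2 - C (2 * n + 1) := by
  -- an induction principle over ℤ
  have indZ : ∀ (P : ℤ → Prop), P 0 → (∀ m : ℤ, P m ↔ P (m + 1)) → ∀ m : ℤ, P m := by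
    intro P h0 hs m
    induction m using Int.induction_on with
    | zero => exact h0
    | succ i ih => exact (hs i).mp ih
    | pred i ih =>
        have h := (hs (-(i : ℤ) - 1)).mpr
          (by rw [show (-(i : ℤ) - 1 + 1) = -(i : ℤ) from by ring]; exact ih)
        exact h
  -- basic values
  have hfm1 : f (-1) = -1 := by
    have h := hrec 0
    norm_num at h
    rw [hf0, hf1] at h
    linear_combination h
  have hg0 : g 0 = 1 := by
    have h := hg 0
    norm_num [hf0, hfm1] at h
    exact h
  have hg1 : g 1 = 1 := by
    have h := hg 1
    norm_num [hf0, hf1] at h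
    exact h
  -- g satisfies the same recurrence
  have hgrec : ∀ j : ℤ, g (j + 1) = X * g j - g (j - 1) := by
    intro j
    have h1 := hrec j
    have h2 := hrec (j - 1)
    rw [show j - 1 + 1 = j from by ring, show j - 1 - 1 = j - 2 from by ring] at h2
    rw [hg (j + 1), hg j, hg (j - 1), show j + 1 - 1 = j from by ring,
      show j - 1 - 1 = j - 2 from by ring]
    linear_combination h1 - h2
  -- Catalan identity for f
  have hcatf : ∀ m : ℤ, f (m + 1) ^ 2 - f (m + 2) * f m = 1 := by
    apply indZ
    · have h2 := hrec 1
      norm_num at h2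
      rw [show (0:ℤ) + 1 = 1 from by norm_num, show (0:ℤ) + 2 = 2 from by norm_num,
        hf0, hf1, h2]
      ring
    · intro m
      have h1 := hrec (m + 1)
      rw [show m + 1 + 1 = m + 2 from by ring, show m + 1 - 1 = m from by ring] at h1
      have h2 := hrec (m + 2)
      rw [show m + 2 + 1 = m + 3 from by ring, show m + 2 - 1 = m + 1 from by ring] at h2
      constructor
      · intro ih
        rw [show m + 1 + 1 = m + 2 from by ring, show m + 1 + 2 = m + 3 from by ring]
        linear_combination ih + f (m + 2) * h1 - f (m + 1) * h2
      · intro ih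
        rw [show m + 1 + 1 = m + 2 from by ring, show m + 1 + 2 = m + 3 from by ring] at ih
        linear_combination ih - f (m + 2) * h1 + f (m + 1) * h2
  -- Catalan identity for g
  have hcatg : ∀ m : ℤ, g (m + 1) ^ 2 - g (m + 2) * g m = 2 - X := by
    apply indZ
    · have h2 := hgrec 1
      norm_num at h2
      norm_num [hg0, hg1, h2]
      ring
    · intro m
      have h1 := hgrec (m + 1)
      rw [show m + 1 + 1 = m + 2 from by ring, show m + 1 - 1 = m from by ring] at h1
      have h2 := hgrec (m + 2)
      rw [show m + 2 + 1 = m + 3 from by ring, show m + 2 - 1 = m + 1 from by ring] at h2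
      constructor
      · intro ih
        rw [show m + 1 + 1 = m + 2 from by ring, show m + 1 + 2 = m + 3 from by ring]
        linear_combination ih + g (m + 2) * h1 - g (m + 1) * h2
      · intro ih
        rw [show m + 1 + 1 = m + 2 from by ring, show m + 1 + 2 = m + 3 from by ring] at ih
        linear_combination ih - g (m + 2) * h1 + g (m + 1) * h2
  -- step identity for F
  have hFs : ∀ m : ℤ, F (m + 1) = f (m + 1) ^ 2 + F m := by
    intro m
    have h1 := hrec (m + 1)
    rw [show m + 1 + 1 = m + 2 from by ring, show m + 1 - 1 = m from by ring] at h1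
    have hd := congrArg derivative h1
    simp only [derivative_sub, derivative_mul, derivative_X, one_mul] at hd
    rw [hF (m + 1), hF m, show m + 1 + 1 = m + 2 from by ring]
    linear_combination f (m + 1) * hd - derivative (f (m + 1)) * h1
  -- step identity for G
  have hGs : ∀ m : ℤ, G (m + 1) = g (m + 1) ^ 2 + G m := by
    intro m
    have h1 := hgrec (m + 1)
    rw [show m + 1 + 1 = m + 2 from by ring, show m + 1 - 1 = m from by ring] at h1
    have hd := congrArg derivative h1
    simp only [derivative_sub, derivative_mul, derivative_X, one_mul] at hd
    rw [hG (m + 1), hG m, show m + 1 + 1 = m + 2 from by ring]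
    linear_combination g (m + 1) * hd - derivative (g (m + 1)) * h1
  -- identity (i)
  have hi : ∀ m : ℤ, (2 - X : Polynomial ℤ) = g (m + 1) ^ 2 + g m ^ 2 - X * g m * g (m + 1) := by
    apply indZ
    · norm_num [hg0, hg1]
    · intro m
      have h1 := hgrec (m + 1)
      rw [show m + 1 + 1 = m + 2 from by ring, show m + 1 - 1 = m from by ring] at h1
      constructor
      · intro ih
        rw [show m + 1 + 1 = m + 2 from by ring, h1]
        linear_combination ih
      · intro ih
        rw [show m + 1 + 1 = m + 2 from by ring, h1] at ih
        linear_combination ih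
  -- identity (iv)
  have hiv : ∀ m : ℤ, (X ^ 2 - 4) * F m = f (m + 1) ^ 2 - f m ^ 2 - C (2 * m + 1) := by
    apply indZ
    · have hF0 : F 0 = 0 := by
        have h := hF 0
        norm_num [hf0, hf1] at h
        exact h
      norm_num [hF0, hf0, hf1]
    · intro m
      have h1 := hrec (m + 1)
      rw [show m + 1 + 1 = m + 2 from by ring, show m + 1 - 1 = m from by ring] at h1
      have hc := hcatf m
      rw [h1] at hc
      have hC : (C (2 * (m + 1) + 1) : Polynomial ℤ) = C (2 * m + 1) + 2 := by
        rw [show 2 * (m + 1) + 1 = (2 * m + 1) + 2 from by ring, map_add]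
        norm_num
      constructor
      · intro ih
        rw [show m + 1 + 1 = m + 2 from by ring, h1, hC]
        linear_combination ih + (X ^ 2 - 4) * hFs m - 2 * hc
      · intro ih
        rw [show m + 1 + 1 = m + 2 from by ring, h1, hC] at ih
        linear_combination ih - (X ^ 2 - 4) * hFs m + 2 * hc
  -- identity (iii)
  have hiii : ∀ m : ℤ, (4 - X ^ 2) * G m = g m ^ 2 - g (m + 1) ^ 2 - C (2 * m) * (X - 2) := by
    apply indZ
    · have hG0 : G 0 = 0 := by
        have h := hG 0
        norm_num [hg0, hg1] at h
        exact h
      norm_num [hG0, hg0, hg1]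
    · intro m
      have h1 := hgrec (m + 1)
      rw [show m + 1 + 1 = m + 2 from by ring, show m + 1 - 1 = m from by ring] at h1
      have hc := hcatg m
      rw [h1] at hc
      have hC : (C (2 * (m + 1)) : Polynomial ℤ) = C (2 * m) + 2 := by
        rw [show 2 * (m + 1) = (2 * m) + 2 from by ring, map_add]
        norm_num
      constructor
      · intro ih
        rw [show m + 1 + 1 = m + 2 from by ring, h1, hC]
        linear_combination ih + (4 - X ^ 2) * hGs m + 2 * hc
      · intro ih
        rw [show m + 1 + 1 = m + 2 from by ring, h1, hC] at ih
        linear_combination ih - (4 - X ^ 2) * hGs m - 2 * hc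
  refine ⟨hi n, ?_, hiii n, hiv n⟩
  -- identity (ii) from (i) and (iii)
  have hC1 : (C (2 * n + 1) : Polynomial ℤ) = C (2 * n) + 1 := by
    rw [map_add]; norm_num
  have hC2 : (C (2 * n - 1) : Polynomial ℤ) = C (2 * n) - 1 := by
    rw [map_sub]; norm_num
  rw [hC1, hC2]
  linear_combination hiii n + (C (2 * n) : Polynomial ℤ) * hi n
end

section
/- Let n be a nonzero integer and ω ∈ ℂ a root of G_n. Then g_n(ω) ≠ 0, and setting h = g_{n+1}(ω)/g_n(ω): if n > 0 then |h| > 1, and if n < 0 then |h| < 1. -/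
open Polynomial

set_option linter.unusedSectionVars false

private lemma int_ind (P : ℤ → Prop) (h0 : P 0) (hup : ∀ m, P m → P (m+1)) (hdn : ∀ m, P m → P (m-1)) : ∀ m, P m := by
  intro m
  induction m using Int.induction_on with
  | zero => exact h0
  | succ i ih => exact hup i ih
  | pred i ih => exact hdn (-i) ih

lemma key_ineq (ν : ℝ) (hν : 0 < ν) (z w : ℂ) (hz0 : z ≠ 0) (hw0 : w ≠ 0)
    (hsgn : 0 ≤ (Complex.normSq z - 1) * (Complex.normSq w - 1))
    (hne : Complex.normSq z ≠ 1 → Complex.normSq w ≠ 1)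
    (hzim : z.im = 0 → Complex.normSq z ≠ 1)
    (hC : w - w⁻¹ + (ν:ℂ) * (z - z⁻¹) = 0) :
    ‖w + z‖ < ‖w * z + 1‖ := by
  have hnz : 0 < Complex.normSq z := Complex.normSq_pos.2 hz0
  have hnw : 0 < Complex.normSq w := Complex.normSq_pos.2 hw0
  have him := congrArg Complex.im hC
  simp only [Complex.add_im, Complex.sub_im, Complex.mul_im, Complex.inv_im,
    Complex.ofReal_re, Complex.ofReal_im, Complex.zero_im, zero_mul, add_zero] at him
  -- him : w.im - (-w.im / normSq w) + (ν * (z.im - (-z.im / normSq z))) = 0  (roughly)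
  have him' : w.im * Complex.normSq z * (Complex.normSq w + 1)
      = -(ν * z.im * Complex.normSq w * (Complex.normSq z + 1)) := by
    field_simp at him
    linarith [him]
  have expand : Complex.normSq (w*z+1) - Complex.normSq (w+z)
      = (Complex.normSq w - 1)*(Complex.normSq z - 1) - 4 * (w.im * z.im) := by
    simp only [Complex.normSq_apply, Complex.add_re, Complex.add_im, Complex.mul_re,
      Complex.mul_im, Complex.one_re, Complex.one_im]
    ring
  have hlt : Complex.normSq (w+z) < Complex.normSq (w*z+1) := by
    rcases eq_or_ne z.im 0 with h0 | h0
    · have h1 := hzim h0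
      have h2 := hne h1
      have h3 : 0 < (Complex.normSq z - 1) * (Complex.normSq w - 1) :=
        lt_of_le_of_ne hsgn (Ne.symm (mul_ne_zero (sub_ne_zero.2 h1) (sub_ne_zero.2 h2)))
      rw [h0, mul_zero, mul_zero] at expand
      nlinarith [expand, h3]
    · have h4 : w.im * z.im < 0 := by
        have h6 : w.im * z.im * (Complex.normSq z * (Complex.normSq w + 1))
            = -(ν * (z.im*z.im) * Complex.normSq w * (Complex.normSq z + 1)) := by
          linear_combination z.im * him'
        have h7 : 0 < z.im * z.im := mul_self_pos.2 h0
        have hA : 0 < Complex.normSq z * (Complex.normSq w + 1) :=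
          mul_pos hnz (by linarith)
        have hB : 0 < ν * (z.im*z.im) * Complex.normSq w * (Complex.normSq z + 1) := by
          apply mul_pos (mul_pos (mul_pos hν h7) hnw); linarith
        nlinarith [h6, hA, hB]
      nlinarith [expand, hsgn, h4]
  rw [Complex.norm_def, Complex.norm_def]
  exact Real.sqrt_lt_sqrt (Complex.normSq_nonneg _) hlt

lemma exists_zeta (ω : ℂ) : ∃ ζ : ℂ, ζ ≠ 0 ∧ ζ + ζ⁻¹ = ω := by
  obtain ⟨w, hw⟩ := IsAlgClosed.exists_pow_nat_eq (ω^2 - 4) (n := 2) (by norm_num)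
  have hζ0 : (ω + w)/2 ≠ 0 := by
    intro h
    have hw' : w = -ω := by linear_combination 2*h
    rw [hw'] at hw
    have h4 : (4:ℂ) = 0 := by linear_combination hw
    norm_num at h4
  refine ⟨(ω + w)/2, hζ0, ?_⟩
  have h2 : ((ω+w)/2) * (((ω+w)/2) + ((ω+w)/2)⁻¹) = ((ω+w)/2) * ω := by
    rw [mul_add, mul_inv_cancel₀ hζ0]
    linear_combination hw/4
  exact mul_left_cancel₀ hζ0 h2

section
variable (f g G : ℤ → Polynomial ℤ)
variable (hf0 : f 0 = 0) (hf1 : f 1 = 1)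
variable (hrec : ∀ j : ℤ, f (j + 1) = X * f j - f (j - 1))
variable (hg : ∀ j : ℤ, g j = f j - f (j - 1))
variable (hG : ∀ m : ℤ, G m = derivative (g (m + 1)) * g m - g (m + 1) * derivative (g m))
include hf0 hf1 hrec hg hG

lemma L_fm1 : f (-1) = -1 := by
  have h := hrec 0
  rw [show (0:ℤ)+1 = 1 by ring, show (0:ℤ)-1 = -1 by ring, hf0, hf1] at h
  linear_combination h

lemma L_g0 : g 0 = 1 := by
  rw [hg 0, hf0, show (0:ℤ)-1 = -1 by ring, L_fm1 f g G hf0 hf1 hrec hg hG]; ring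

lemma L_g1 : g 1 = 1 := by
  rw [hg 1, hf1, show (1:ℤ)-1 = 0 by ring, hf0]; ring

lemma L_grec : ∀ j : ℤ, g (j+1) = X * g j - g (j-1) := by
  intro j
  have h1 := hrec j
  have h2 := hrec (j-1)
  rw [show j-1+1 = j by ring, show j-1-1 = j-2 by ring] at h2
  rw [hg (j+1), hg j, hg (j-1), show j+1-1 = j by ring, show j-1-1 = j-2 by ring, h1, h2]
  ring

lemma L_cas : ∀ j : ℤ, g (j+1) * f j - g j * f (j+1) = -1 := by
  apply int_ind
  · rw [show (0:ℤ)+1 = 1 by ring, hf0, hf1, hg 0, hf0, show (0:ℤ)-1 = -1 by ring,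
      L_fm1 f g G hf0 hf1 hrec hg hG]
    ring
  · intro m ih
    have h1 := hrec (m+1)
    rw [show m+1-1 = m by ring] at h1
    have h2 := L_grec f g G hf0 hf1 hrec hg hG (m+1)
    rw [show m+1-1 = m by ring] at h2
    rw [show m+1+1 = m+2 by ring] at h1 h2 ⊢
    rw [h1, h2]
    linear_combination ih
  · intro m ih
    have h1 := hrec m
    have h2 := L_grec f g G hf0 hf1 hrec hg hG m
    rw [show m-1+1 = m by ring]
    linear_combination ih - f m * h2 + g m * h1

lemma L_fneg : ∀ j : ℤ, f (-j) = - f j := by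
  have key : ∀ j : ℤ, f (-j) = - f j ∧ f (-(j+1)) = - f (j+1) := by
    apply int_ind
    · constructor
      · rw [show -(0:ℤ) = 0 by ring, hf0]; ring
      · rw [show -(0+1:ℤ) = -1 by ring, show (0:ℤ)+1 = 1 by ring, hf1,
          L_fm1 f g G hf0 hf1 hrec hg hG]
    · rintro m ⟨ih1, ih2⟩
      refine ⟨ih2, ?_⟩
      have h1 := hrec (-(m+1))
      rw [show -(m+1)+1 = -m by ring, show -(m+1)-1 = -(m+1+1) by ring] at h1
      have h2 := hrec (m+1)
      rw [show m+1-1 = m by ring] at h2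
      rw [show m+1+1 = m+2 by ring] at h1 h2 ⊢
      have h3 : f (-(m+2)) = X * f (-(m+1)) - f (-m) := by linear_combination h1
      rw [h3, ih1, ih2, h2]; ring
    · rintro m ⟨ih1, ih2⟩
      rw [show m-1+1 = m by ring]
      refine ⟨?_, ih1⟩
      have h1 := hrec (-m)
      rw [show -m+1 = -(m-1) by ring, show -m-1 = -(m+1) by ring] at h1
      rw [h1, ih1, ih2]
      linear_combination hrec m
  exact fun j => (key j).1

lemma L_gneg : ∀ j : ℤ, g (-j) = g (j+1) := by
  intro j
  rw [hg (-j), hg (j+1), show -j-1 = -(j+1) by ring, show j+1-1 = j by ring,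
    L_fneg f g G hf0 hf1 hrec hg hG j, L_fneg f g G hf0 hf1 hrec hg hG (j+1)]
  ring

lemma L_Gneg : ∀ j : ℤ, G (-j) = - G j := by
  intro j
  have h1 := hG (-j)
  rw [show -j+1 = -(j-1) by ring, L_gneg f g G hf0 hf1 hrec hg hG (j-1),
    L_gneg f g G hf0 hf1 hrec hg hG j, show j-1+1 = j by ring] at h1
  rw [h1, hG j]; ring

lemma L_Grec : ∀ j : ℤ, G j = G (j-1) + (g j)^2 := by
  intro j
  have h1 := hG j
  have h2 := hG (j-1)
  rw [show j-1+1 = j by ring] at h2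
  have h3 := L_grec f g G hf0 hf1 hrec hg hG j
  have h4 : derivative (g (j+1)) = g j + X * derivative (g j) - derivative (g (j-1)) := by
    rw [h3]; simp [derivative_mul]
  rw [h1, h4, h3, h2]; ring

lemma L_G0 : G 0 = 0 := by
  have h := hG 0
  rw [zero_add, L_g1 f g G hf0 hf1 hrec hg hG, L_g0 f g G hf0 hf1 hrec hg hG] at h
  simpa using h

lemma L_star : ∀ m : ℤ, (4 - X^2) * G m =
    ((2*m-1 : ℤ) : Polynomial ℤ) * (g (m+1))^2
    - ((2*m : ℤ) : Polynomial ℤ) * X * (g (m+1)) * (g m)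
    + ((2*m+1 : ℤ) : Polynomial ℤ) * (g m)^2 := by
  apply int_ind
  · rw [L_G0 f g G hf0 hf1 hrec hg hG, zero_add, L_g1 f g G hf0 hf1 hrec hg hG, L_g0 f g G hf0 hf1 hrec hg hG]
    push_cast
    ring
  · intro m ih
    have hGr := L_Grec f g G hf0 hf1 hrec hg hG (m+1)
    rw [show m+1-1 = m by ring] at hGr
    have hgr := L_grec f g G hf0 hf1 hrec hg hG (m+1)
    rw [show m+1-1 = m by ring] at hgr
    rw [show m+1+1 = m+2 by ring] at hgr ⊢
    rw [hGr, hgr]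
    push_cast at ih ⊢
    linear_combination ih
  · intro m ih
    have hGr := L_Grec f g G hf0 hf1 hrec hg hG m
    have hgr := L_grec f g G hf0 hf1 hrec hg hG m
    rw [show m-1+1 = m by ring]
    rw [hgr] at ih
    push_cast at ih ⊢
    linear_combination ih - (4 - X^2) * hGr

lemma L_eval2g : ∀ j : ℤ, eval 2 (g j) = 1 ∧ eval 2 (g (j+1)) = 1 := by
  apply int_ind
  · rw [zero_add, L_g0 f g G hf0 hf1 hrec hg hG, L_g1 f g G hf0 hf1 hrec hg hG]; simp
  · rintro j ⟨ih1, ih2⟩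
    refine ⟨ih2, ?_⟩
    have h := congrArg (eval 2) (L_grec f g G hf0 hf1 hrec hg hG (j+1))
    rw [show j+1-1 = j by ring, show j+1+1 = j+2 by ring] at h
    rw [show j+1+1 = j+2 by ring, h]
    simp [ih1, ih2]
  · rintro j ⟨ih1, ih2⟩
    rw [show j-1+1 = j by ring]
    refine ⟨?_, ih1⟩
    have h := congrArg (eval 2) (L_grec f g G hf0 hf1 hrec hg hG j)
    simp only [eval_sub, eval_mul, eval_X] at h
    rw [ih1, ih2] at h
    linarith [h]

lemma L_eval2G : ∀ j : ℤ, eval 2 (G j) = j := by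
  apply int_ind
  · rw [L_G0 f g G hf0 hf1 hrec hg hG]; simp
  · intro j ih
    have h := congrArg (eval 2) (L_Grec f g G hf0 hf1 hrec hg hG (j+1))
    rw [show j+1-1 = j by ring] at h
    simp only [eval_add, eval_pow] at h
    rw [h, ih, (L_eval2g f g G hf0 hf1 hrec hg hG j).2]
    ring
  · intro j ih
    have h := congrArg (eval 2) (L_Grec f g G hf0 hf1 hrec hg hG j)
    simp only [eval_add, eval_pow] at h
    have h2 := (L_eval2g f g G hf0 hf1 hrec hg hG (j-1)).2
    rw [show j-1+1 = j by ring] at h2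
    rw [ih, h2] at h
    linarith [h]

lemma L_evalm2g : ∀ j : ℤ, (eval (-2) (g j))^2 = (2*j-1)^2 ∧
    eval (-2) (g j) * eval (-2) (g (j+1)) = -((2*j-1)*(2*j+1)) := by
  apply int_ind
  · rw [zero_add, L_g0 f g G hf0 hf1 hrec hg hG, L_g1 f g G hf0 hf1 hrec hg hG]; norm_num
  · rintro j ⟨ih1, ih2⟩
    have hodd : ((2*j-1)^2 : ℤ) ≠ 0 := by
      apply pow_ne_zero; omega
    have hsq : (2*j-1)^2 * (eval (-2) (g (j+1)))^2 = (2*j-1)^2 * (2*j+1)^2 := by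
      linear_combination (eval (-2) (g j) * eval (-2) (g (j+1)) - (2*j-1)*(2*j+1)) * ih2 - (eval (-2) (g (j+1)))^2 * ih1
    have key1 : (eval (-2) (g (j+1)))^2 = (2*(j+1)-1)^2 := by
      have := mul_left_cancel₀ hodd hsq
      rw [this]; ring
    refine ⟨key1, ?_⟩
    have h := congrArg (eval (-2 : ℤ)) (L_grec f g G hf0 hf1 hrec hg hG (j+1))
    simp only [eval_sub, eval_mul, eval_X] at h
    rw [show j+1-1 = j by ring, show j+1+1 = j+1+1 by ring] at h
    calc eval (-2) (g (j+1)) * eval (-2) (g (j+1+1))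
        = -2 * (eval (-2) (g (j+1)))^2 - eval (-2) (g j) * eval (-2) (g (j+1)) := by
          rw [h]; ring
      _ = -((2*(j+1)-1)*(2*(j+1)+1)) := by rw [key1, ih2]; ring
  · rintro j ⟨ih1, ih2⟩
    rw [show j-1+1 = j by ring]
    have hodd : ((2*j-1)^2 : ℤ) ≠ 0 := by
      apply pow_ne_zero; omega
    have h := congrArg (eval (-2 : ℤ)) (L_grec f g G hf0 hf1 hrec hg hG j)
    simp only [eval_sub, eval_mul, eval_X] at h
    have key2 : eval (-2) (g (j-1)) * eval (-2) (g j) = -((2*(j-1)-1)*(2*(j-1)+1)) := by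
      calc eval (-2) (g (j-1)) * eval (-2) (g j)
          = -2 * (eval (-2) (g j))^2 - eval (-2) (g j) * eval (-2) (g (j+1)) := by
            linear_combination (eval (-2) (g j)) * h
        _ = -((2*(j-1)-1)*(2*(j-1)+1)) := by rw [ih1, ih2]; ring
    have hsq : (2*j-1)^2 * (eval (-2) (g (j-1)))^2 = (2*j-1)^2 * (2*(j-1)-1)^2 := by
      linear_combination (eval (-2) (g (j-1)) * eval (-2) (g j) - (2*(j-1)-1)*(2*(j-1)+1)) * key2 - (eval (-2) (g (j-1)))^2 * ih1
    exact ⟨mul_left_cancel₀ hodd hsq, key2⟩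

lemma L_evalm2G : ∀ j : ℤ, 3 * eval (-2) (G j) = j*(2*j-1)*(2*j+1) := by
  apply int_ind
  · rw [L_G0 f g G hf0 hf1 hrec hg hG]; simp
  · intro j ih
    have h := congrArg (eval (-2 : ℤ)) (L_Grec f g G hf0 hf1 hrec hg hG (j+1))
    rw [show j+1-1 = j by ring] at h
    simp only [eval_add, eval_pow] at h
    have h2 := (L_evalm2g f g G hf0 hf1 hrec hg hG (j+1)).1
    linear_combination 3 * h + ih + 3 * h2
  · intro j ih
    have h := congrArg (eval (-2 : ℤ)) (L_Grec f g G hf0 hf1 hrec hg hG j)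
    simp only [eval_add, eval_pow] at h
    have h2 := (L_evalm2g f g G hf0 hf1 hrec hg hG j).1
    linear_combination ih - 3 * h - 3 * h2

lemma L_param (ζ : ℂ) (hζ : ζ ≠ 0) :
    ∀ j : ℤ, (aeval (ζ + ζ⁻¹)) (g j) * (1 + ζ) = ζ^j + ζ^(1-j) := by
  have hzadd : ∀ k l : ℤ, ζ^(k+l) = ζ^k * ζ^l := fun k l => zpow_add₀ hζ k l
  have hz1 : ζ^(1:ℤ) = ζ := zpow_one ζ
  have key : ∀ j : ℤ, ((aeval (ζ + ζ⁻¹)) (g j) * (1 + ζ) = ζ^j + ζ^(1-j)) ∧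
      ((aeval (ζ + ζ⁻¹)) (g (j+1)) * (1 + ζ) = ζ^(j+1) + ζ^(1-(j+1))) := by
    apply int_ind
    · constructor
      · rw [L_g0 f g G hf0 hf1 hrec hg hG]; simp
      · rw [zero_add, L_g1 f g G hf0 hf1 hrec hg hG]; simp; ring
    · rintro j ⟨ih1, ih2⟩
      refine ⟨ih2, ?_⟩
      have h := congrArg (aeval (ζ + ζ⁻¹)) (L_grec f g G hf0 hf1 hrec hg hG (j+1))
      simp only [map_sub, map_mul, aeval_X] at h
      rw [show j+1-1 = j by ring] at h
      have expand : (aeval (ζ + ζ⁻¹)) (g (j+1+1)) * (1+ζ)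
          = (ζ + ζ⁻¹) * ((aeval (ζ + ζ⁻¹)) (g (j+1)) * (1+ζ))
            - (aeval (ζ + ζ⁻¹)) (g j) * (1+ζ) := by
        rw [h]; ring
      rw [expand, ih1, ih2,
        show ζ^(j+1+1) = ζ^j * ζ * ζ by rw [hzadd (j+1) 1, hzadd j 1, hz1],
        show ζ^(j+1) = ζ^j * ζ by rw [hzadd j 1, hz1],
        show ζ^(1-(j+1)) = (ζ^j)⁻¹ by rw [show 1-(j+1) = -j by ring, zpow_neg],
        show ζ^(1-(j+1+1)) = (ζ^j)⁻¹ * ζ⁻¹ by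
          rw [show 1-(j+1+1) = -j + -1 by ring, hzadd, zpow_neg, zpow_neg, hz1],
        show ζ^(1-j) = ζ * (ζ^j)⁻¹ by
          rw [show 1-j = 1 + -j by ring, hzadd, zpow_neg, hz1]]
      have hA : ζ^j ≠ 0 := zpow_ne_zero j hζ
      field_simp
      ring
    · rintro j ⟨ih1, ih2⟩
      rw [show j-1+1 = j by ring]
      refine ⟨?_, ih1⟩
      have h := congrArg (aeval (ζ + ζ⁻¹)) (L_grec f g G hf0 hf1 hrec hg hG j)
      simp only [map_sub, map_mul, aeval_X] at h
      have expand : (aeval (ζ + ζ⁻¹)) (g (j-1)) * (1+ζ)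
          = (ζ + ζ⁻¹) * ((aeval (ζ + ζ⁻¹)) (g j) * (1+ζ))
            - (aeval (ζ + ζ⁻¹)) (g (j+1)) * (1+ζ) := by
        rw [h]; ring
      rw [expand, ih1, ih2,
        show ζ^(j+1) = ζ^j * ζ by rw [hzadd j 1, hz1],
        show ζ^(1-(j+1)) = (ζ^j)⁻¹ by rw [show 1-(j+1) = -j by ring, zpow_neg],
        show ζ^(1-j) = ζ * (ζ^j)⁻¹ by
          rw [show 1-j = 1 + -j by ring, hzadd, zpow_neg, hz1],
        show ζ^(j-1) = ζ^j * ζ⁻¹ by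
          rw [show j-1 = j + -1 by ring, hzadd, zpow_neg, hz1],
        show ζ^(1-(j-1)) = ζ * ζ * (ζ^j)⁻¹ by
          rw [show 1-(j-1) = 1 + 1 + -j by ring, hzadd, hzadd, zpow_neg, hz1]]
      have hA : ζ^j ≠ 0 := zpow_ne_zero j hζ
      field_simp
      ring
  exact fun j => (key j).1

lemma main_pos (n : ℤ) (hn : 0 < n) (ω : ℂ) (hω : (aeval ω) (G n) = 0) :
    (aeval ω) (g n) ≠ 0 ∧
    1 < ‖(aeval ω) (g (n + 1)) / (aeval ω) (g n)‖ := by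
  set a := (aeval ω) (g (n+1)) with ha
  set b := (aeval ω) (g n) with hb
  have E : ((2*n-1 : ℤ) : ℂ) * a^2 - ((2*n : ℤ) : ℂ) * ω * a * b + ((2*n+1 : ℤ) : ℂ) * b^2 = 0 := by
    have h := congrArg (aeval ω) (L_star f g G hf0 hf1 hrec hg hG n)
    simp only [map_mul, map_sub, map_add, map_pow, aeval_X, map_intCast] at h
    rw [hω, mul_zero] at h
    linear_combination -h
  have hbne : b ≠ 0 := by
    intro hb0
    rw [hb0] at E
    have h1 : ((2*n-1 : ℤ) : ℂ) * a^2 = 0 := by linear_combination E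
    have h2 : ((2*n-1 : ℤ) : ℂ) ≠ 0 := by
      simp only [ne_eq, Int.cast_eq_zero]
      omega
    have ha0 : a = 0 := by
      have := (mul_eq_zero.1 h1).resolve_left h2
      exact pow_eq_zero_iff (by norm_num) |>.1 this
    have hc := congrArg (aeval ω) (L_cas f g G hf0 hf1 hrec hg hG n)
    simp only [map_sub, map_mul, map_neg, map_one] at hc
    rw [← ha, ← hb, ha0, hb0] at hc
    simp at hc
  refine ⟨hbne, ?_⟩
  -- ω ≠ ±2
  have hbridge : ∀ x : ℤ, (aeval ((x:ℤ) : ℂ)) (G n) = ((eval x (G n) : ℤ) : ℂ) := by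
    intro x
    have h := aeval_algebraMap_apply_eq_algebraMap_eval (R := ℤ) (A := ℂ) x (G n)
    simpa using h
  have hω2 : ω ≠ 2 := by
    intro h2
    have e1 := hbridge 2
    rw [show (((2:ℤ)):ℂ) = (2:ℂ) by norm_num, ← h2, hω, L_eval2G f g G hf0 hf1 hrec hg hG n] at e1
    have : (n:ℂ) = 0 := by exact_mod_cast e1.symm
    rw [Int.cast_eq_zero] at this
    omega
  have hωm2 : ω ≠ -2 := by
    intro h2
    have e1 := hbridge (-2)
    rw [show (((-2:ℤ)):ℂ) = (-2:ℂ) by norm_num, ← h2, hω] at e1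
    have e2 : ((3 * eval (-2) (G n) : ℤ) : ℂ) = 0 := by push_cast; rw [← e1]; ring
    rw [L_evalm2G f g G hf0 hf1 hrec hg hG n] at e2
    have : (n*(2*n-1)*(2*n+1) : ℤ) = 0 := by exact_mod_cast e2
    have h3 : n ≠ 0 := by omega
    rcases mul_eq_zero.1 this with h|h
    · rcases mul_eq_zero.1 h with h|h
      · omega
      · omega
    · omega
  obtain ⟨ζ, hζ0, hζω⟩ := exists_zeta ω
  have hζ1 : ζ ≠ 1 := by
    intro h; rw [h] at hζω; apply hω2; rw [← hζω]; norm_num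
  have hζm1 : ζ ≠ -1 := by
    intro h; rw [h] at hζω; apply hωm2; rw [← hζω]; norm_num
  have h1ζ : (1:ℂ) + ζ ≠ 0 := by
    intro h; exact hζm1 (by linear_combination h)
  have pa := L_param f g G hf0 hf1 hrec hg hG ζ hζ0 (n+1)
  have pb := L_param f g G hf0 hf1 hrec hg hG ζ hζ0 n
  rw [hζω] at pa pb
  set t := ζ^n with ht
  have htne : t ≠ 0 := zpow_ne_zero n hζ0
  have e1 : ζ^(n+1) = t * ζ := zpow_add_one₀ hζ0 n
  have e2 : ζ^(1-(n+1)) = t⁻¹ := by rw [show 1-(n+1) = -n by ring, zpow_neg]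
  have e3 : ζ^(1-n) = t⁻¹ * ζ := by
    rw [show 1-n = -n+1 by ring, zpow_add_one₀ hζ0, zpow_neg]
  have epa2 : a * (1+ζ) * t = t^2*ζ + 1 := by
    rw [pa, e1, e2]; field_simp
  have epb2 : b * (1+ζ) * t = t^2 + ζ := by
    rw [pb, e3]; field_simp
  have hz2 : ζ^2 - 1 ≠ 0 := by
    intro h
    rcases mul_eq_zero.1 (show (ζ-1)*(ζ+1) = 0 by linear_combination h) with h'|h'
    · exact hζ1 (by linear_combination h')
    · exact hζm1 (by linear_combination h')
  -- condition C
  have hC : t^2 - (t^2)⁻¹ + 2*(n:ℂ) * (ζ - ζ⁻¹) = 0 := by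
    have hfac : (t^2 - (t^2)⁻¹ + 2*(n:ℂ) * (ζ - ζ⁻¹)) * -(ζ^2 - 1) * t^2
        = (2*(n:ℂ)-1)*(t^2*ζ+1)^2 - 2*(n:ℂ)*(ζ+ζ⁻¹)*((t^2*ζ+1)*(t^2+ζ))
          + (2*(n:ℂ)+1)*(t^2+ζ)^2 := by
      field_simp
      ring
    have E2 : (2*(n:ℂ)-1)*(a*(1+ζ)*t)^2 - 2*(n:ℂ)*(ζ+ζ⁻¹)*((a*(1+ζ)*t)*(b*(1+ζ)*t))
          + (2*(n:ℂ)+1)*(b*(1+ζ)*t)^2 = 0 := by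
      rw [hζω]
      push_cast at E
      linear_combination ((1+ζ)^2 * t^2) * E
    rw [epa2, epb2] at E2
    have h0 := hfac.trans E2
    have h1 := (mul_eq_zero.1 h0).resolve_right (pow_ne_zero 2 htne)
    exact (mul_eq_zero.1 h1).resolve_right (neg_ne_zero.2 hz2)
  -- apply key inequality
  have hw0 : t^2 ≠ 0 := pow_ne_zero 2 htne
  set u := Complex.normSq ζ with huu
  have hu : 0 < u := Complex.normSq_pos.2 hζ0
  set k := n.toNat with hkk
  have hk : (k:ℤ) = n := Int.toNat_of_nonneg hn.le
  have hk1 : k ≠ 0 := by omega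
  have hnw : Complex.normSq (t^2) = (u^k)^2 := by
    rw [map_pow, ht, map_zpow₀ Complex.normSq, ← huu, ← hk, zpow_natCast]
  have hsgn : 0 ≤ (Complex.normSq ζ - 1) * (Complex.normSq (t^2) - 1) := by
    rw [hnw, ← huu]
    rcases le_total u 1 with h|h
    · have h2 : u^k ≤ 1 := pow_le_one₀ hu.le h
      have h3 : 0 ≤ u^k := pow_nonneg hu.le k
      nlinarith [mul_nonneg (sub_nonneg.2 h) (mul_nonneg (sub_nonneg.2 h2) (by linarith : (0:ℝ) ≤ 1 + u^k))]
    · have h2 : 1 ≤ u^k := one_le_pow₀ h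
      have h3 : 1 ≤ (u^k)^2 := by nlinarith
      nlinarith [mul_nonneg (sub_nonneg.2 h) (sub_nonneg.2 h3)]
  have hne : Complex.normSq ζ ≠ 1 → Complex.normSq (t^2) ≠ 1 := by
    rw [hnw, ← huu]
    intro h1 h2
    rcases lt_or_gt_of_ne h1 with h|h
    · have h3 : u^k < 1 := pow_lt_one₀ hu.le h hk1
      have h4 : 0 ≤ u^k := pow_nonneg hu.le k
      nlinarith
    · have h3 : 1 < u^k := one_lt_pow₀ h hk1
      nlinarith
  have hzim : ζ.im = 0 → Complex.normSq ζ ≠ 1 := by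
    intro h0 h1
    rw [Complex.normSq_apply, h0] at h1
    rcases mul_eq_zero.1 (show (ζ.re-1)*(ζ.re+1) = 0 by nlinarith [h1]) with h'|h'
    · have hre : ζ.re = 1 := by linarith
      exact hζ1 (Complex.ext (by simp [hre, Complex.one_re]) (by simp [h0, Complex.one_im]))
    · have hre : ζ.re = -1 := by linarith
      exact hζm1 (Complex.ext (by simp [hre, Complex.neg_re, Complex.one_re])
        (by simp [h0, Complex.neg_im, Complex.one_im]))
  have hν : (0:ℝ) < 2*(n:ℝ) := by
    have : (0:ℝ) < (n:ℝ) := by exact_mod_cast hn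
    linarith
  have key := key_ineq (2*(n:ℝ)) hν ζ (t^2) hζ0 hw0 hsgn hne hzim
    (by push_cast; exact hC)
  -- translate back
  have ea : ‖t^2 * ζ + 1‖ = ‖a‖ * (‖1+ζ‖ * ‖t‖) := by
    rw [← epa2, norm_mul, norm_mul, mul_assoc]
  have eb : ‖t^2 + ζ‖ = ‖b‖ * (‖1+ζ‖ * ‖t‖) := by
    rw [← epb2, norm_mul, norm_mul, mul_assoc]
  have hCpos : 0 < ‖1+ζ‖ * ‖t‖ :=
    mul_pos (norm_pos_iff.mpr h1ζ) (norm_pos_iff.mpr htne)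
  have hab : ‖b‖ < ‖a‖ := by
    rw [ea, eb] at key
    exact lt_of_mul_lt_mul_right key hCpos.le
  rw [norm_div, one_lt_div (norm_pos_iff.mpr hbne)]
  exact hab

end

/-- for `n ≠ 0` and `ω ∈ ℂ` a root of `G n`, one has `g n (ω) ≠ 0`,
and with `h = g (n+1) (ω) / g n (ω)`: `|h| > 1` if `n > 0` and `|h| < 1` if `n < 0`. -/
theorem stmt16 (f : ℤ → Polynomial ℤ)
    (hf0 : f 0 = 0) (hf1 : f 1 = 1)
    (hrec : ∀ j : ℤ, f (j + 1) = X * f j - f (j - 1))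
    (g : ℤ → Polynomial ℤ) (hg : ∀ j : ℤ, g j = f j - f (j - 1))
    (G : ℤ → Polynomial ℤ)
    (hG : ∀ m : ℤ, G m = derivative (g (m + 1)) * g m - g (m + 1) * derivative (g m))
    (n : ℤ) (hn : n ≠ 0) (ω : ℂ) (hω : (Polynomial.aeval ω) (G n) = 0) :
    (Polynomial.aeval ω) (g n) ≠ 0 ∧
    (0 < n → 1 < ‖(Polynomial.aeval ω) (g (n + 1)) / (Polynomial.aeval ω) (g n)‖) ∧
    (n < 0 → ‖(Polynomial.aeval ω) (g (n + 1)) / (Polynomial.aeval ω) (g n)‖ < 1) := by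
  rcases hn.lt_or_gt with hneg | hpos
  · -- n < 0
    set m := -n with hm
    have hmpos : 0 < m := by omega
    have hGm : (aeval ω) (G m) = 0 := by
      have h1 : G n = - G m := by
        rw [show n = -m by omega]
        exact L_Gneg f g G hf0 hf1 hrec hg hG m
      rw [h1, map_neg, neg_eq_zero] at hω
      exact hω
    obtain ⟨hb', hlt'⟩ := main_pos f g G hf0 hf1 hrec hg hG m hmpos ω hGm
    have hga : g n = g (m+1) := by
      rw [show n = -m by omega]
      exact L_gneg f g G hf0 hf1 hrec hg hG m
    have hgb : g (n+1) = g m := by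
      have h2 := L_gneg f g G hf0 hf1 hrec hg hG (m-1)
      rw [show m-1+1 = m by ring] at h2
      rw [show n+1 = -(m-1) by omega]
      exact h2
    have hane : (aeval ω) (g (m+1)) ≠ 0 := by
      intro h0
      rw [h0] at hlt'
      simp only [zero_div, map_zero] at hlt'
      norm_num at hlt'
    refine ⟨by rw [hga]; exact hane, fun h => by omega, fun _ => ?_⟩
    rw [hga, hgb, norm_div, div_lt_one (norm_pos_iff.mpr hane)]
    rw [norm_div, one_lt_div (norm_pos_iff.mpr hb')] at hlt'
    exact hlt'
  · -- 0 < n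
    obtain ⟨h1, h2⟩ := main_pos f g G hf0 hf1 hrec hg hG n hpos ω hω
    exact ⟨h1, fun _ => h2, fun h => by omega⟩
end

section
/- Let n be an integer, p a prime dividing 2n, K a number field containing a root ω of G_n, and v a valuation on K extending the p-adic valuation with v(p) = 1. Then v(g_n(ω)) = 0. -/
open Polynomial

lemma auxVInt {K : Type*} [Field K] (v : AddValuation K (WithTop ℚ)) (m : ℤ) :
    0 ≤ v (m : K) := by
  have vnat : ∀ k : ℕ, 0 ≤ v (k : K) := by
    intro k
    induction k with
    | zero => simp [v.map_zero]
    | succ k ih =>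
      push_cast
      exact v.map_le_add ih (by rw [v.map_one])
  rcases m with k | k
  · simpa using vnat k
  · rw [Int.cast_negSucc, v.map_neg]
    exact vnat (k + 1)

lemma auxVAeval {K : Type*} [Field K] (v : AddValuation K (WithTop ℚ)) (ω : K)
    (hω : 0 ≤ v ω) (Q : Polynomial ℤ) : 0 ≤ v ((aeval ω) Q) := by
  rw [aeval_eq_sum_range]
  apply v.map_le_sum
  intro i _
  rw [zsmul_eq_mul, v.map_mul, v.map_pow]
  exact add_nonneg (auxVInt v _) (nsmul_nonneg hω i)

lemma auxIntegral {K : Type*} [Field K] (v : AddValuation K (WithTop ℚ)) (ω : K)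
    (Q : Polynomial ℤ) (hQ : Q.Monic) (h0 : (aeval ω) Q = 0) : 0 ≤ v ω := by
  by_contra hneg
  push_neg at hneg
  have hω0 : ω ≠ 0 := by
    rintro rfl
    rw [v.map_zero] at hneg
    exact absurd hneg not_top_lt
  set d := Q.natDegree with hd
  have hdne : d ≠ 0 := by
    intro hz
    rw [hQ.natDegree_eq_zero.mp hz] at h0
    simp at h0
  have hsum := Polynomial.aeval_eq_sum_range (p := Q) ω
  rw [Finset.sum_range_succ, hQ.coeff_natDegree, one_smul, h0] at hsum
  -- hsum : 0 = ∑ i in range d, coeff i • ω^i + ω^d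
  set S := ∑ i ∈ Finset.range d, Q.coeff i • ω ^ i with hS
  have hωd : ω ^ d = -S := by linear_combination -hsum
  have hvS : v (ω ^ (d - 1)) ≤ v S := by
    apply v.map_le_sum
    intro i hi
    rw [Finset.mem_range] at hi
    rw [zsmul_eq_mul, v.map_mul]
    have h1 : v (ω ^ (d - 1)) ≤ v (ω ^ i) := by
      have e : ω ^ (d - 1) = ω ^ (d - 1 - i) * ω ^ i := by
        rw [← pow_add]
        congr 1
        omega
      rw [e, v.map_mul]
      have : v (ω ^ (d - 1 - i)) ≤ 0 := by
        rw [v.map_pow]; exact nsmul_nonpos hneg.le _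
      calc v (ω ^ (d-1-i)) + v (ω ^ i) ≤ 0 + v (ω ^ i) := by
            exact add_le_add_left this _
        _ = v (ω ^ i) := zero_add _
    exact le_trans h1 (le_add_of_nonneg_left (auxVInt v _))
  have hkey : v (ω ^ (d - 1)) ≤ v (ω ^ (d - 1)) + v ω := by
    have e : ω ^ d = ω ^ (d - 1) * ω := by
      rw [← pow_succ]
      congr 1
      omega
    calc v (ω ^ (d-1)) ≤ v S := hvS
      _ = v (-S) := (v.map_neg S).symm
      _ = v (ω ^ d) := by rw [hωd]
      _ = v (ω ^ (d-1)) + v ω := by rw [e, v.map_mul]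
  have hne : v (ω ^ (d - 1)) ≠ ⊤ := (v.ne_top_iff).mpr (pow_ne_zero _ hω0)
  obtain ⟨r, hr⟩ := WithTop.ne_top_iff_exists.mp hne
  obtain ⟨q, hq⟩ := WithTop.ne_top_iff_exists.mp (ne_top_of_lt hneg)
  rw [← hr, ← hq, ← WithTop.coe_add, WithTop.coe_le_coe] at hkey
  have hq0 : q < 0 := by
    rw [← hq] at hneg
    exact_mod_cast hneg
  linarith

lemma auxMonic (A B c : Polynomial ℤ) (ka kb : ℕ) (hA : A.Monic)
    (hdA : A.degree = ka) (hdB : B.degree = kb) (hba : kb < ka) (hc : c.degree ≤ 1)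
    (h1 : 1 ≤ ka) : (A ^ 2 - (B ^ 2 + c)).Monic := by
  apply (hA.pow 2).sub_of_left
  have e2 : (A ^ 2).degree = ((2 * ka : ℕ) : WithBot ℕ) := by
    rw [sq, degree_mul, hdA]
    push_cast
    ring
  rw [e2]
  refine lt_of_le_of_lt (degree_add_le _ _) (max_lt ?_ ?_)
  · rw [sq, degree_mul, hdB, ← Nat.cast_add, Nat.cast_lt]
    omega
  · refine lt_of_le_of_lt hc ?_
    exact_mod_cast Nat.cast_lt.mpr (by omega : 1 < 2 * ka)


/-- let `p` be a prime dividing `2n`, `K` a number field containing a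
root `ω` of `G n`, and `v` an (additive, rational-valued) valuation on `K` extending
the `p`-adic valuation, normalized by `v p = 1`. Then `v (g n (ω)) = 0`. -/
theorem stmt17 (f : ℤ → Polynomial ℤ)
    (hf0 : f 0 = 0) (hf1 : f 1 = 1)
    (hrec : ∀ j : ℤ, f (j + 1) = X * f j - f (j - 1))
    (g : ℤ → Polynomial ℤ) (hg : ∀ j : ℤ, g j = f j - f (j - 1))
    (G : ℤ → Polynomial ℤ)
    (hG : ∀ m : ℤ, G m = derivative (g (m + 1)) * g m - g (m + 1) * derivative (g m))
    (n : ℤ) (p : ℕ) (hp : p.Prime) (hdvd : (p : ℤ) ∣ 2 * n)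
    (K : Type*) [Field K] [NumberField K]
    (ω : K) (hω : (Polynomial.aeval ω) (G n) = 0)
    (v : AddValuation K (WithTop ℚ)) (hv : v (p : K) = 1) :
    v ((Polynomial.aeval ω) (g n)) = 0 := by
  -- basic values
  have hfm1 : f (-1) = -1 := by
    have h := hrec 0
    norm_num at h
    linear_combination h - hf1 + X * hf0
  have hfm2 : f (-2) = -X := by
    have h := hrec (-1)
    norm_num at h
    linear_combination h - hf0 + X * hfm1
  have hf2 : f 2 = X := by
    have h := hrec 1
    norm_num at h
    linear_combination h + X * hf1 - hf0
  have g0 : g 0 = 1 := by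
    have h := hg 0
    norm_num at h
    linear_combination h + hf0 - hfm1
  have g1 : g 1 = 1 := by
    have h := hg 1
    norm_num at h
    linear_combination h + hf1 - hf0
  have g2 : g 2 = X - 1 := by
    have h := hg 2
    norm_num at h
    linear_combination h + hf2 - hf1
  have gm1 : g (-1) = X - 1 := by
    have h := hg (-1)
    norm_num at h
    linear_combination h + hfm1 - hfm2
  -- recurrence for g
  have grec : ∀ j : ℤ, g (j + 1) = X * g j - g (j - 1) := by
    intro j
    have h1 := hg (j + 1)
    simp only [add_sub_cancel_right] at h1
    have h2 := hg j
    have h3 := hg (j - 1)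
    have h4 := hrec j
    have h5 := hrec (j - 1)
    rw [sub_add_cancel] at h5
    linear_combination h1 - X * h2 + h3 + h4 - h5
  -- I1
  have I1 : ∀ j : ℤ, g (j+1)^2 + g j^2 - X * g (j+1) * g j = 2 - X := by
    intro j
    induction j using Int.induction_on with
    | zero =>
      norm_num [g0, g1]
    | succ k ih =>
      have h2 := grec (↑k + 1)
      simp only [add_sub_cancel_right] at h2
      linear_combination ih + (g (↑k+1+1) - g ↑k) * h2
    | pred k ih =>
      have h2 := grec (-↑k)
      have e : (-↑k - 1 + 1 : ℤ) = -↑k := by ring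
      rw [e]
      linear_combination ih - (g (-↑k+1) - g (-↑k-1)) * h2
  -- I3
  have I3 : ∀ j : ℤ, G (j+1) = G j + g (j+1)^2 := by
    intro j
    have h2 : g (j+1+1) = X * g (j+1) - g j := by
      have := grec (j+1)
      simpa only [add_sub_cancel_right] using this
    have h3 : derivative (g (j+1+1)) = g (j+1) + X * derivative (g (j+1)) - derivative (g j) := by
      rw [h2, derivative_sub, derivative_mul, derivative_X, one_mul]
    rw [hG (j+1), hG j, h3, h2]
    ring
  -- I2'
  have I2 : ∀ j : ℤ, (X^2 - 4) * G j = g (j+1)^2 - g j^2 + ((2*j : ℤ) : Polynomial ℤ) * (X - 2) := by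
    intro j
    induction j using Int.induction_on with
    | zero =>
      have h0 : G 0 = 0 := by
        rw [hG 0]
        norm_num [g0, g1]
      rw [h0]
      norm_num [g0, g1]
    | succ k ih =>
      have h3 := I3 ↑k
      have h2 : g (↑k+1+1) = X * g (↑k+1) - g ↑k := by
        have := grec (↑k+1)
        simpa only [add_sub_cancel_right] using this
      have h1 := I1 ↑k
      push_cast
      push_cast at ih
      linear_combination (X^2-4) * h3 + ih - (g (↑k+1+1) + X * g (↑k+1) - g ↑k) * h2 - 2 * h1
    | pred k ih =>
      have h3 := I3 (-↑k-1)
      have e : (-↑k - 1 + 1 : ℤ) = -↑k := by ring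
      rw [e] at h3
      have h2 := grec (-↑k)
      have h1 := I1 (-↑k)
      rw [e]
      push_cast
      push_cast at ih
      linear_combination ih - (X^2-4) * h3 + (g (-↑k+1) + X * g (-↑k) - g (-↑k-1)) * h2 + 2 * h1 - 2*(g (-↑k+1) - g (-↑k-1)) * h2
  -- monicity and degrees
  have gmono : ∀ k : ℕ, ((g ((k:ℤ)+1)).Monic ∧ (g ((k:ℤ)+1)).degree = k) ∧
      ((g ((k:ℤ)+1+1)).Monic ∧ (g ((k:ℤ)+1+1)).degree = (k+1 : ℕ)) := by
    intro k
    induction k with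
    | zero =>
      have eX : (X - 1 : Polynomial ℤ) = X - C 1 := by rw [C_1]
      have i1 : ((0:ℕ):ℤ) + 1 = 1 := by norm_num
      have i2 : ((0:ℕ):ℤ) + 1 + 1 = 2 := by norm_num
      rw [i2, i1, g1, g2, eX]
      refine ⟨⟨monic_one, by rw [degree_one]; norm_num⟩,
        monic_X_sub_C 1, by rw [degree_X_sub_C]; norm_num⟩
    | succ k ih =>
      have e1 : ((k+1:ℕ):ℤ) + 1 = (k:ℤ) + 1 + 1 := by push_cast; ring
      have e2 : ((k+1:ℕ):ℤ) + 1 + 1 = (k:ℤ) + 1 + 1 + 1 := by push_cast; ring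
      have hrek : g ((k:ℤ)+1+1+1) = X * g ((k:ℤ)+1+1) - g ((k:ℤ)+1) := by
        have := grec ((k:ℤ)+1+1)
        simpa only [add_sub_cancel_right] using this
      have hXB : (X * g ((k:ℤ)+1+1)).degree = ((k+2:ℕ) : WithBot ℕ) := by
        rw [degree_mul, degree_X, ih.2.2]
        exact_mod_cast congrArg (Nat.cast : ℕ → WithBot ℕ) (by omega : 1 + (k+1) = k+2)
      have hlt : (g ((k:ℤ)+1)).degree < (X * g ((k:ℤ)+1+1)).degree := by
        rw [hXB, ih.1.2]
        exact_mod_cast (by omega : k < k + 2)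
      refine ⟨⟨ih.2.1, by rw [e1]; exact ih.2.2⟩, ?_, ?_⟩
      · rw [e2, hrek]
        exact (monic_X.mul ih.2.1).sub_of_left hlt
      · rw [e2, hrek, degree_sub_eq_left_of_degree_lt hlt, hXB]
  -- symmetry
  have gsymm : ∀ k : ℕ, g (-(k:ℤ)) = g ((k:ℤ)+1) ∧ g (-(k:ℤ)-1) = g ((k:ℤ)+1+1) := by
    intro k
    induction k with
    | zero =>
      have i1 : -((0:ℕ):ℤ) = 0 := by norm_num
      have i2 : ((0:ℕ):ℤ) + 1 = 1 := by norm_num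
      have i3 : -((0:ℕ):ℤ) - 1 = -1 := by norm_num
      have i4 : ((0:ℕ):ℤ) + 1 + 1 = 2 := by norm_num
      rw [i4, i3, i2, i1, g0, g1, gm1, g2]
      exact ⟨rfl, rfl⟩
    | succ k ih =>
      have e1 : -((k+1:ℕ):ℤ) = -(k:ℤ) - 1 := by push_cast; ring
      have e2 : ((k+1:ℕ):ℤ) + 1 = (k:ℤ) + 1 + 1 := by push_cast; ring
      have e3 : -((k+1:ℕ):ℤ) - 1 = -(k:ℤ) - 1 - 1 := by push_cast; ring
      have e4 : ((k+1:ℕ):ℤ) + 1 + 1 = (k:ℤ) + 1 + 1 + 1 := by push_cast; ring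
      have hneg : g (-(k:ℤ)) = X * g (-(k:ℤ)-1) - g (-(k:ℤ)-1-1) := by
        have := grec (-(k:ℤ)-1)
        rw [show (-(k:ℤ)-1+1 : ℤ) = -(k:ℤ) from by ring] at this
        exact this
      have hpos := grec ((k:ℤ)+1+1)
      rw [show ((k:ℤ)+1+1-1 : ℤ) = (k:ℤ)+1 from by ring] at hpos
      refine ⟨by rw [e1, e2]; exact ih.2, ?_⟩
      rw [e3, e4]
      linear_combination hneg - hpos + X * ih.2 - ih.1
  -- dispose of n = 0
  by_cases hn0 : n = 0
  · subst hn0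
    rw [g0, map_one, v.map_one]
  -- the key identity at ω
  have EK := congrArg (aeval ω) (I2 n)
  simp only [map_mul, map_sub, map_add, map_pow, aeval_X, map_intCast, map_ofNat, hω,
    mul_zero] at EK
  -- integrality of ω
  have hvω : 0 ≤ v ω := by
    have e2X : (X - 2 : Polynomial ℤ) = X - C 2 := by rw [map_ofNat]
    rcases lt_or_ge 0 n with hpos | hneg
    · set k := n.toNat with hk
      have hk1 : 1 ≤ k := by omega
      have hdegc : (-(((2*n:ℤ) : Polynomial ℤ) * (X-2))).degree ≤ 1 := by
        rw [degree_neg]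
        refine le_trans (degree_mul_le _ _) ?_
        have h1 := degree_intCast_le (R := ℤ) (2*n)
        have h2 : (X - 2 : Polynomial ℤ).degree = 1 := by rw [e2X, degree_X_sub_C]
        calc ((2*n:ℤ) : Polynomial ℤ).degree + (X - 2 : Polynomial ℤ).degree
            ≤ 0 + 1 := by exact add_le_add h1 (le_of_eq h2)
          _ = 1 := zero_add 1
      have hQ := auxMonic (g ((k:ℤ)+1)) (g (((k-1:ℕ):ℤ)+1)) (-(((2*n:ℤ) : Polynomial ℤ) * (X-2)))
        k (k-1) (gmono k).1.1 (gmono k).1.2 (gmono (k-1)).1.2 (by omega) hdegc hk1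
      rw [show ((k:ℤ)+1) = n+1 from by omega, show (((k-1:ℕ):ℤ)+1) = n from by omega] at hQ
      refine auxIntegral v ω _ hQ ?_
      simp only [map_sub, map_add, map_pow, map_neg, map_mul, map_intCast, aeval_X, map_ofNat]
      linear_combination -EK
    · set k := (-n).toNat with hk
      have hk1 : 1 ≤ k := by omega
      have hdegc : ((((2*n:ℤ) : Polynomial ℤ) * (X-2))).degree ≤ 1 := by
        refine le_trans (degree_mul_le _ _) ?_
        have h1 := degree_intCast_le (R := ℤ) (2*n)
        have h2 : (X - 2 : Polynomial ℤ).degree = 1 := by rw [e2X, degree_X_sub_C]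
        calc ((2*n:ℤ) : Polynomial ℤ).degree + (X - 2 : Polynomial ℤ).degree
            ≤ 0 + 1 := by exact add_le_add h1 (le_of_eq h2)
          _ = 1 := zero_add 1
      have hQ := auxMonic (g ((k:ℤ)+1)) (g (((k-1:ℕ):ℤ)+1)) ((((2*n:ℤ) : Polynomial ℤ) * (X-2)))
        k (k-1) (gmono k).1.1 (gmono k).1.2 (gmono (k-1)).1.2 (by omega) hdegc hk1
      have hAA : g ((k:ℤ)+1) = g n := by
        rw [← (gsymm k).1, show -(k:ℤ) = n from by omega]
      have hBB : g (((k-1:ℕ):ℤ)+1) = g (n+1) := by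
        rw [← (gsymm (k-1)).1, show -((k-1:ℕ):ℤ) = n+1 from by omega]
      rw [hAA, hBB] at hQ
      refine auxIntegral v ω _ hQ ?_
      simp only [map_sub, map_add, map_pow, map_mul, map_intCast, aeval_X, map_ofNat]
      linear_combination EK
  -- the final contradiction
  have hva0 : 0 ≤ v ((aeval ω) (g n)) := auxVAeval v ω hvω _
  by_contra hne
  have hva : 0 < v ((aeval ω) (g n)) := lt_of_le_of_ne hva0 (Ne.symm hne)
  have h2n : (0 : WithTop ℚ) < v (((2*n:ℤ)) : K) := by
    obtain ⟨m, hm⟩ := hdvd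
    rw [hm]
    push_cast
    rw [v.map_mul, hv]
    have h1 : (0 : WithTop ℚ) < 1 := by norm_num
    exact lt_of_lt_of_le h1 (le_add_of_nonneg_right (auxVInt v m))
  have hv2ω : (0 : WithTop ℚ) ≤ v (2 - ω) := by
    refine v.map_le_sub ?_ hvω
    have := auxVInt v 2
    push_cast at this
    exact this
  have hvb : 0 < v ((aeval ω) (g (n+1))) := by
    have hE : (aeval ω) (g (n+1)) * (aeval ω) (g (n+1)) =
        (aeval ω) (g n) * (aeval ω) (g n) + (((2*n:ℤ)) : K) * (2 - ω) := by
      linear_combination -EK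
    have hbb : 0 < v ((aeval ω) (g (n+1)) * (aeval ω) (g (n+1))) := by
      rw [hE]
      refine lt_of_lt_of_le (lt_min ?_ ?_) (v.map_add _ _)
      · rw [v.map_mul]
        exact lt_of_lt_of_le hva (le_add_of_nonneg_left hva.le)
      · rw [v.map_mul]
        exact lt_of_lt_of_le h2n (le_add_of_nonneg_right hv2ω)
    rw [v.map_mul] at hbb
    by_contra hb
    push_neg at hb
    have := add_le_add hb hb
    rw [add_zero] at this
    exact absurd (lt_of_lt_of_le hbb this) (lt_irrefl 0)
  -- two-sided induction
  have stepD : ∀ j : ℤ, (0 < v ((aeval ω) (g j)) ∧ 0 < v ((aeval ω) (g (j+1)))) →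
      (0 < v ((aeval ω) (g (j-1))) ∧ 0 < v ((aeval ω) (g (j-1+1)))) := by
    intro j h
    constructor
    · have hg' : g (j-1) = X * g j - g (j+1) := by linear_combination grec j
      have : (aeval ω) (g (j-1)) = ω * (aeval ω) (g j) - (aeval ω) (g (j+1)) := by
        rw [hg']
        simp only [map_sub, map_mul, aeval_X]
      rw [this]
      refine lt_of_lt_of_le (lt_min ?_ ?_) (v.map_sub _ _)
      · rw [v.map_mul]
        exact lt_of_lt_of_le h.1 (le_add_of_nonneg_left hvω)
      · exact h.2
    · rw [show j-1+1 = j from by ring]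
      exact h.1
  have stepU : ∀ j : ℤ, (0 < v ((aeval ω) (g j)) ∧ 0 < v ((aeval ω) (g (j+1)))) →
      (0 < v ((aeval ω) (g (j+1))) ∧ 0 < v ((aeval ω) (g (j+1+1)))) := by
    intro j h
    refine ⟨h.2, ?_⟩
    have hg' : g (j+1+1) = X * g (j+1) - g j := by
      have := grec (j+1)
      simpa only [add_sub_cancel_right] using this
    have : (aeval ω) (g (j+1+1)) = ω * (aeval ω) (g (j+1)) - (aeval ω) (g j) := by
      rw [hg']
      simp only [map_sub, map_mul, aeval_X]
    rw [this]
    refine lt_of_lt_of_le (lt_min ?_ ?_) (v.map_sub _ _)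
    · rw [v.map_mul]
      exact lt_of_lt_of_le h.2 (le_add_of_nonneg_left hvω)
    · exact h.1
  have keyD : ∀ (N : ℕ) (j : ℤ), (0 < v ((aeval ω) (g j)) ∧ 0 < v ((aeval ω) (g (j+1)))) →
      (0 < v ((aeval ω) (g (j - N))) ∧ 0 < v ((aeval ω) (g (j - N + 1)))) := by
    intro N
    induction N with
    | zero =>
      intro j h
      rw [show j - ((0:ℕ):ℤ) = j from by omega]
      exact h
    | succ N ih =>
      intro j h
      rw [show j - ((N+1:ℕ):ℤ) = j - (N:ℤ) - 1 from by push_cast; ring]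
      exact stepD _ (ih j h)
  have keyU : ∀ (N : ℕ) (j : ℤ), (0 < v ((aeval ω) (g j)) ∧ 0 < v ((aeval ω) (g (j+1)))) →
      (0 < v ((aeval ω) (g (j + N))) ∧ 0 < v ((aeval ω) (g (j + N + 1)))) := by
    intro N
    induction N with
    | zero =>
      intro j h
      rw [show j + ((0:ℕ):ℤ) = j from by omega]
      exact h
    | succ N ih =>
      intro j h
      rw [show j + ((N+1:ℕ):ℤ) = j + (N:ℤ) + 1 from by push_cast; ring]
      exact stepU _ (ih j h)
  rcases lt_or_ge 0 n with hpos | hneg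
  · have hP := keyD (n-1).toNat n ⟨hva, hvb⟩
    rw [show n - (((n-1).toNat:ℕ):ℤ) = 1 from by omega] at hP
    rw [g1, map_one, v.map_one] at hP
    exact absurd hP.1 (lt_irrefl 0)
  · have hP := keyU (-n).toNat n ⟨hva, hvb⟩
    rw [show n + (((-n).toNat:ℕ):ℤ) = 0 from by omega] at hP
    rw [g0, map_one, v.map_one] at hP
    exact absurd hP.1 (lt_irrefl 0)
end

section
/- Let n be a nonzero integer and ω a root of G_n in an algebraically closed field of characteristic 0. Then g_n(ω) ≠ 0 and (g_{n+1}(ω)/g_n(ω))² - 1 = 2n(2 - ω)/g_n(ω)². -/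
open Polynomial

/-- for `n ≠ 0` and `ω` a root of `G n` in an algebraically closed field
of characteristic 0, `g n (ω) ≠ 0` and
`(g (n+1) (ω) / g n (ω))² - 1 = 2n (2 - ω) / g n (ω)²`. -/
theorem stmt18 (f : ℤ → Polynomial ℤ)
    (hf0 : f 0 = 0) (hf1 : f 1 = 1)
    (hrec : ∀ j : ℤ, f (j + 1) = X * f j - f (j - 1))
    (g : ℤ → Polynomial ℤ) (hg : ∀ j : ℤ, g j = f j - f (j - 1))
    (G : ℤ → Polynomial ℤ)
    (hG : ∀ m : ℤ, G m = derivative (g (m + 1)) * g m - g (m + 1) * derivative (g m))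
    (n : ℤ) (hn : n ≠ 0)
    (K : Type*) [Field K] [IsAlgClosed K] [CharZero K]
    (ω : K) (hω : (Polynomial.aeval ω) (G n) = 0) :
    (Polynomial.aeval ω) (g n) ≠ 0 ∧
    ((Polynomial.aeval ω) (g (n + 1)) / (Polynomial.aeval ω) (g n)) ^ 2 - 1
      = ((2 * n : ℤ) : K) * (2 - ω) / ((Polynomial.aeval ω) (g n)) ^ 2 := by
  have hfm1 : f (-1) = -1 := by
    have h := hrec 0
    rw [zero_add, hf1, hf0, zero_sub, mul_zero, zero_sub] at h
    linear_combination h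
  have g0 : g 0 = 1 := by
    have h := hg 0
    rw [show (0 : ℤ) - 1 = -1 from by norm_num, hf0, hfm1] at h
    rw [h]; ring
  have g1 : g 1 = 1 := by
    have := hg 1
    norm_num [hf1, hf0] at this
    exact this
  have grec : ∀ j : ℤ, g (j + 1) = X * g j - g (j - 1) := by
    intro j
    have h1 := hrec j
    have h2 := hrec (j - 1)
    rw [show j - 1 + 1 = j from by ring] at h2
    rw [hg (j + 1), hg j, hg (j - 1), add_sub_cancel_right]
    linear_combination h1 - h2
  -- key identity Q
  have key : ∀ m : ℤ, (g m) ^ 2 + (g (m + 1)) ^ 2 - X * g m * g (m + 1) = 2 - X := by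
    intro m
    induction m using Int.induction_on with
    | zero => rw [zero_add, g0, g1]; ring
    | succ k ih =>
      have h := grec ((k : ℤ) + 1)
      rw [add_sub_cancel_right] at h
      linear_combination ih + (g ((k : ℤ) + 1 + 1) - g k) * h
    | pred k ih =>
      have h := grec (-(k : ℤ))
      have h' : g (-(k : ℤ) - 1) = X * g (-(k : ℤ)) - g (-(k : ℤ) + 1) := by
        linear_combination h
      rw [show (-(k : ℤ) - 1 + 1) = -(k : ℤ) from by ring]
      linear_combination ih + (g (-(k : ℤ) - 1) - g (-(k : ℤ) + 1)) * h'
  -- main identity GI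
  have GI : ∀ m : ℤ, (4 - X ^ 2) * G m
      = (g m) ^ 2 - (g (m + 1)) ^ 2 - C (2 * m) * (X - 2) := by
    intro m
    induction m using Int.induction_on with
    | zero =>
      rw [hG 0, zero_add, g0, g1]
      simp
    | succ k ih =>
      have h := grec ((k : ℤ) + 1)
      rw [add_sub_cancel_right] at h
      have hd := congrArg derivative h
      rw [derivative_sub, derivative_mul, derivative_X, one_mul] at hd
      rw [hG ((k : ℤ) + 1)]
      rw [hG (k : ℤ)] at ih
      rw [hd, h]
      have hc : (C (2 * ((k : ℤ) + 1)) : Polynomial ℤ) = C (2 * (k : ℤ)) + 2 := by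
        rw [show 2 * ((k : ℤ) + 1) = 2 * (k : ℤ) + 2 from by ring, map_add, map_ofNat]
      rw [hc]
      linear_combination ih + 2 * key (k : ℤ)
    | pred k ih =>
      have h := grec (-(k : ℤ))
      have hd := congrArg derivative h
      rw [derivative_sub, derivative_mul, derivative_X, one_mul] at hd
      rw [hG (-(k : ℤ) - 1), show (-(k : ℤ) - 1 + 1) = -(k : ℤ) from by ring]
      rw [hG (-(k : ℤ))] at ih
      rw [hd, h] at ih
      have hq := key (-(k : ℤ) - 1)
      rw [show (-(k : ℤ) - 1 + 1) = -(k : ℤ) from by ring] at hq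
      have hc : (C (2 * (-(k : ℤ) - 1)) : Polynomial ℤ) = C (2 * (-(k : ℤ))) - 2 := by
        rw [show 2 * (-(k : ℤ) - 1) = 2 * (-(k : ℤ)) - 2 from by ring, map_sub, map_ofNat]
      rw [hc]
      linear_combination ih - 2 * hq
  -- evaluate at 2 : every g m evaluates to 1
  have gtwo : ∀ m : ℤ, (Polynomial.aeval (2 : K)) (g m) = 1
      ∧ (Polynomial.aeval (2 : K)) (g (m + 1)) = 1 := by
    intro m
    induction m using Int.induction_on with
    | zero =>
      rw [zero_add, g0, g1]; simp
    | succ k ih =>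
      obtain ⟨ih1, ih2⟩ := ih
      refine ⟨ih2, ?_⟩
      have h := grec ((k : ℤ) + 1)
      rw [add_sub_cancel_right] at h
      have := congrArg (Polynomial.aeval (2 : K)) h
      rw [map_sub, map_mul, aeval_X, ih1, ih2] at this
      rw [this]; ring
    | pred k ih =>
      obtain ⟨ih1, ih2⟩ := ih
      refine ⟨?_, by rwa [show -(k : ℤ) - 1 + 1 = -(k : ℤ) from by ring]⟩
      have h := grec (-(k : ℤ))
      have := congrArg (Polynomial.aeval (2 : K)) h
      rw [map_sub, map_mul, aeval_X, ih1, ih2] at this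
      linear_combination this
  -- evaluate key and GI at ω
  set A := (Polynomial.aeval ω) (g n) with hA
  set B := (Polynomial.aeval ω) (g (n + 1)) with hB
  have eG : (0 : K) = A ^ 2 - B ^ 2 - ((2 * n : ℤ) : K) * (ω - 2) := by
    have h := congrArg (Polynomial.aeval ω) (GI n)
    simp only [map_mul, map_sub, map_pow, aeval_X, aeval_C, map_ofNat, map_intCast, hω,
      mul_zero, algebraMap_int_eq, eq_intCast] at h
    push_cast at h ⊢
    linear_combination h
  have eQ : A ^ 2 + B ^ 2 - ω * A * B = 2 - ω := by
    have h := congrArg (Polynomial.aeval ω) (key n)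
    simp only [map_sub, map_add, map_mul, map_pow, aeval_X, map_ofNat] at h
    linear_combination h
  have hA0 : A ≠ 0 := by
    intro h0
    rw [h0] at eG eQ
    have hB2 : B ^ 2 = 2 - ω := by linear_combination eQ
    have hB2' : B ^ 2 = ((2 * n : ℤ) : K) * (2 - ω) := by linear_combination eG
    have hfac : (2 - ω) * (1 - ((2 * n : ℤ) : K)) = 0 := by
      linear_combination hB2' - hB2
    rcases mul_eq_zero.mp hfac with hc | hc
    · have hω2 : ω = 2 := by linear_combination -hc
      rw [hA, hω2, (gtwo n).1] at h0
      exact one_ne_zero h0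
    · have hZ : ((1 - 2 * n : ℤ) : K) = 0 := by push_cast at hc ⊢; linear_combination hc
      have : (1 - 2 * n : ℤ) = 0 := by exact_mod_cast hZ
      omega
  refine ⟨hA0, ?_⟩
  have hkey : B ^ 2 - A ^ 2 = ((2 * n : ℤ) : K) * (2 - ω) := by linear_combination eG
  rw [div_pow, ← hkey, div_sub_one (pow_ne_zero 2 hA0)]
end
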